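/- arXiv:2305.10584 — 3 statements merged into one kernel-verified Lean document; each statement's English description precedes it below -/
import Mathlib

section
/- Let (a,b) ⊂ ℝ be a bounded interval, and let f_k, f ∈ W^{1,1}((a,b)) (identified with their continuous representatives). If f_k → f in L¹((a,b)) and ∫_a^b |f_k'(x)| dx → ∫_a^b |f'(x)| dx, then f_k → f uniformly on (a,b). -/
open MeasureTheory Filter Set

noncomputable section

namespace Stmt5Aux

/-- partition points -/
def pt (c d : ℝ) (n j : ℕ) : ℝ := c + j * ((d - c) / n)

lemma pt_zero (c d : ℝ) (n : ℕ) : pt c d n 0 = c := by simp [pt]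

lemma pt_last (c d : ℝ) {n : ℕ} (hn : n ≠ 0) : pt c d n n = d := by
  have : (n : ℝ) ≠ 0 := Nat.cast_ne_zero.mpr hn
  unfold pt; field_simp; ring

lemma pt_succ (c d : ℝ) (n j : ℕ) : pt c d n (j + 1) = pt c d n j + (d - c) / n := by
  simp only [pt, Nat.cast_add, Nat.cast_one]; ring

lemma pt_mono (c d : ℝ) (hcd : c ≤ d) (n : ℕ) {i j : ℕ} (h : i ≤ j) :
    pt c d n i ≤ pt c d n j := by
  have hL : 0 ≤ (d - c) / n := div_nonneg (by linarith) (Nat.cast_nonneg n)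
  have : (i : ℝ) ≤ j := Nat.cast_le.mpr h
  unfold pt; nlinarith

lemma pt_mem (c d : ℝ) (hcd : c ≤ d) {n : ℕ} (hn : n ≠ 0) {j : ℕ} (hj : j ≤ n) :
    pt c d n j ∈ Icc c d := by
  constructor
  · simpa [pt_zero] using pt_mono c d hcd n (Nat.zero_le j)
  · have := pt_mono c d hcd n hj
    rwa [pt_last c d hn] at this

set_option maxHeartbeats 1000000 in
lemma stepApprox (c d : ℝ) (hcd : c < d) (ψ : ℝ → ℝ) (hψ : IntegrableOn ψ (Ioc c d)) (ε : ℝ)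
    (hε : 0 < ε) :
    ∃ n : ℕ, 0 < n ∧
      (∫ t in Ioo c d, |ψ t|) - ε ≤
        ∑ j ∈ Finset.range n, |∫ t in pt c d n j..pt c d n (j + 1), ψ t| := by
  have hdc : 0 < d - c := by linarith
  have hψIoo : IntegrableOn ψ (Ioo c d) := hψ.mono_set Ioo_subset_Ioc_self
  set ε0 : ℝ := ε / (8 * (d - c)) with hε0def
  have hε0 : 0 < ε0 := by positivity
  -- continuous approximation
  have hind : Integrable ((Ioo c d).indicator ψ) volume :=
    (integrable_indicator_iff measurableSet_Ioo).mpr hψIoo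
  obtain ⟨φ, hφsupp, hφL1, hφcont, hφint⟩ :=
    hind.exists_hasCompactSupport_integral_sub_le (by positivity : (0:ℝ) < ε / 8)
  have hsubL1 : ∫ t in Ioo c d, |ψ t - φ t| ≤ ε / 8 := by
    have h1 : ∫ t in Ioo c d, |ψ t - φ t| = ∫ t in Ioo c d, ‖(Ioo c d).indicator ψ t - φ t‖ := by
      refine setIntegral_congr_fun measurableSet_Ioo (fun x hx => ?_)
      rw [indicator_of_mem hx, Real.norm_eq_abs]
    have h2 : ∫ t in Ioo c d, ‖(Ioo c d).indicator ψ t - φ t‖ ≤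
        ∫ t, ‖(Ioo c d).indicator ψ t - φ t‖ := by
      refine setIntegral_le_integral ((hind.sub hφint).norm) ?_
      exact Eventually.of_forall fun x => norm_nonneg _
    linarith
  have hφIoo : IntegrableOn φ (Ioo c d) := hφint.integrableOn
  have hsubIoo : IntegrableOn (fun t => |ψ t - φ t|) (Ioo c d) := (hψIoo.sub hφIoo).abs
  -- |ψ| vs |φ|
  have hE2 : (∫ t in Ioo c d, |ψ t|) ≤ (∫ t in Ioo c d, |ψ t - φ t|) + ∫ t in Ioo c d, |φ t| := by
    rw [← integral_add hsubIoo hφIoo.abs]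
    refine integral_mono hψIoo.abs (hsubIoo.add hφIoo.abs) (fun t => ?_)
    simp only [Pi.add_apply]
    calc |ψ t| = |(ψ t - φ t) + φ t| := by ring_nf
    _ ≤ |ψ t - φ t| + |φ t| := abs_add_le _ _
  -- uniform continuity
  have huc : UniformContinuousOn φ (Icc c d) :=
    (isCompact_Icc : IsCompact (Icc c d)).uniformContinuousOn_of_continuous hφcont.continuousOn
  obtain ⟨δ, hδ, Hδ⟩ := Metric.uniformContinuousOn_iff.mp huc ε0 hε0
  -- choose n
  obtain ⟨n₀, hn₀⟩ := exists_nat_gt ((d - c) / δ)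
  set n : ℕ := n₀ + 1 with hn
  have hnpos : 0 < n := Nat.succ_pos _
  have hnR : (0:ℝ) < n := Nat.cast_pos.mpr hnpos
  have hgt : (d - c) / δ < n := lt_of_lt_of_le hn₀ (by exact_mod_cast Nat.le_succ n₀)
  set L : ℝ := (d - c) / n with hLdef
  have hL : 0 < L := div_pos hdc hnR
  have hLδ : L < δ := by
    rw [hLdef, div_lt_iff₀ hnR]
    calc d - c = ((d - c) / δ) * δ := by field_simp
    _ < n * δ := by exact mul_lt_mul_of_pos_right hgt hδ
    _ = δ * n := mul_comm _ _
  set s : ℕ → ℝ := pt c d n with hsdef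
  have hsmem : ∀ j ≤ n, s j ∈ Icc c d := fun j hj => pt_mem c d hcd.le hnpos.ne' hj
  have hsle : ∀ j, s j ≤ s (j + 1) := fun j => pt_mono c d hcd.le n (Nat.le_succ j)
  have hsL : ∀ j, s (j + 1) - s j = L := fun j => by rw [hsdef, pt_succ]; ring
  refine ⟨n, hnpos, ?_⟩
  -- integrability on pieces
  have hpieceIcc : ∀ j < n, Icc (s j) (s (j+1)) ⊆ Icc c d := fun j hj =>
    Icc_subset_Icc (hsmem j hj.le).1 (hsmem (j+1) hj).2
  have hψpiece : ∀ j < n, IntervalIntegrable ψ volume (s j) (s (j+1)) := by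
    intro j hj
    rw [intervalIntegrable_iff_integrableOn_Ioc_of_le (hsle j)]
    exact hψ.mono_set (Ioc_subset_Ioc (hsmem j hj.le).1 (hsmem (j+1) hj).2)
  have hφpiece : ∀ j, IntervalIntegrable φ volume (s j) (s (j+1)) := fun j =>
    hφcont.intervalIntegrable _ _
  have hφabspiece : ∀ j, IntervalIntegrable (fun t => |φ t|) volume (s j) (s (j+1)) := fun j =>
    (hφcont.abs).intervalIntegrable _ _
  -- key piecewise estimate
  have key1 : ∀ j < n, (∫ t in s j..s (j+1), |φ t|) ≤
      |∫ t in s j..s (j+1), φ t| + 2 * ε0 * L := by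
    intro j hj
    have hosc : ∀ t ∈ Icc (s j) (s (j+1)), |φ t - φ (s j)| ≤ ε0 := by
      intro t ht
      have ht' : t ∈ Icc c d := hpieceIcc j hj ht
      have hd : dist t (s j) < δ := by
        rw [Real.dist_eq, abs_of_nonneg (by linarith [ht.1])]
        calc t - s j ≤ s (j+1) - s j := by linarith [ht.2]
        _ = L := hsL j
        _ < δ := hLδ
      exact le_of_lt (by simpa [Real.dist_eq] using Hδ t ht' (s j) (hsmem j hj.le) hd)
    have i1 : (∫ t in s j..s (j+1), |φ t|) ≤ (|φ (s j)| + ε0) * L := by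
      have := intervalIntegral.integral_mono_on (hsle j) (hφabspiece j)
        (intervalIntegrable_const) (fun t ht => by
          calc |φ t| = |φ (s j) + (φ t - φ (s j))| := by ring_nf
          _ ≤ |φ (s j)| + |φ t - φ (s j)| := abs_add_le _ _
          _ ≤ |φ (s j)| + ε0 := by linarith [hosc t ht])
      rwa [intervalIntegral.integral_const, hsL j, smul_eq_mul, mul_comm] at this
    have i2 : |φ (s j)| * L ≤ |∫ t in s j..s (j+1), φ t| + ε0 * L := by
      have e1 : (∫ t in s j..s (j+1), (φ t - φ (s j))) =
          (∫ t in s j..s (j+1), φ t) - φ (s j) * L := by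
        rw [intervalIntegral.integral_sub (hφpiece j) intervalIntegrable_const,
          intervalIntegral.integral_const, hsL j, smul_eq_mul, mul_comm]
      have e2 : |∫ t in s j..s (j+1), (φ t - φ (s j))| ≤ ε0 * L := by
        calc |∫ t in s j..s (j+1), (φ t - φ (s j))| ≤
            ∫ t in s j..s (j+1), |φ t - φ (s j)| :=
              intervalIntegral.abs_integral_le_integral_abs (hsle j)
        _ ≤ ∫ t in s j..s (j+1), (fun _ => ε0) t := by
            refine intervalIntegral.integral_mono_on (hsle j)
              ((hφcont.sub continuous_const).abs.intervalIntegrable _ _)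
              intervalIntegrable_const (fun t ht => hosc t ht)
        _ = ε0 * L := by
            rw [intervalIntegral.integral_const, hsL j, smul_eq_mul, mul_comm]
      calc |φ (s j)| * L = |φ (s j) * L| := by
            rw [abs_mul, abs_of_nonneg hL.le]
      _ ≤ |∫ t in s j..s (j+1), φ t| + |(∫ t in s j..s (j+1), φ t) - φ (s j) * L| := by
            have := abs_sub_abs_le_abs_sub (φ (s j) * L) (∫ t in s j..s (j+1), φ t)
            have h3 : |φ (s j) * L - ∫ t in s j..s (j+1), φ t| =
              |(∫ t in s j..s (j+1), φ t) - φ (s j) * L| := abs_sub_comm _ _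
            linarith
      _ ≤ |∫ t in s j..s (j+1), φ t| + ε0 * L := by rw [← e1] at *; linarith
    nlinarith
  -- key2: compare ψ and φ per piece
  have key2 : ∀ j < n, |∫ t in s j..s (j+1), φ t| -
      (∫ t in s j..s (j+1), |ψ t - φ t|) ≤ |∫ t in s j..s (j+1), ψ t| := by
    intro j hj
    have hsub : (∫ t in s j..s (j+1), (ψ t - φ t)) =
        (∫ t in s j..s (j+1), ψ t) - ∫ t in s j..s (j+1), φ t :=
      intervalIntegral.integral_sub (hψpiece j hj) (hφpiece j)
    have h4 : |∫ t in s j..s (j+1), (ψ t - φ t)| ≤ ∫ t in s j..s (j+1), |ψ t - φ t| :=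
      intervalIntegral.abs_integral_le_integral_abs (hsle j)
    have h5 := abs_sub_abs_le_abs_sub (∫ t in s j..s (j+1), φ t) (∫ t in s j..s (j+1), ψ t)
    rw [abs_sub_comm] at h5
    rw [hsub] at h4
    linarith
  -- sums
  have adjφ : ∑ j ∈ Finset.range n, (∫ t in s j..s (j+1), |φ t|) = ∫ t in Ioo c d, |φ t| := by
    rw [intervalIntegral.sum_integral_adjacent_intervals (fun k _ => hφabspiece k)]
    rw [hsdef, pt_zero, pt_last c d hnpos.ne', intervalIntegral.integral_of_le hcd.le,
      integral_Ioc_eq_integral_Ioo]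
  have adjsub : ∑ j ∈ Finset.range n, (∫ t in s j..s (j+1), |ψ t - φ t|) =
      ∫ t in Ioo c d, |ψ t - φ t| := by
    have h1 : IntegrableOn φ (Ioc c d) := hφint.integrableOn
    have hsubInt : IntegrableOn (fun t => |ψ t - φ t|) (Ioc c d) := (hψ.sub h1).abs
    have hpint : ∀ k < n, IntervalIntegrable (fun t => |ψ t - φ t|) volume (s k) (s (k+1)) := by
      intro k hk
      rw [intervalIntegrable_iff_integrableOn_Ioc_of_le (hsle k)]
      exact hsubInt.mono_set (Ioc_subset_Ioc (hsmem k hk.le).1 (hsmem (k+1) hk).2)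
    rw [intervalIntegral.sum_integral_adjacent_intervals hpint]
    rw [hsdef, pt_zero, pt_last c d hnpos.ne', intervalIntegral.integral_of_le hcd.le,
      integral_Ioc_eq_integral_Ioo]
  have sum1 : ∑ j ∈ Finset.range n, (|∫ t in s j..s (j+1), φ t| -
      (∫ t in s j..s (j+1), |ψ t - φ t|)) ≤
      ∑ j ∈ Finset.range n, |∫ t in s j..s (j+1), ψ t| :=
    Finset.sum_le_sum (fun j hj => key2 j (Finset.mem_range.mp hj))
  have sum2 : ∑ j ∈ Finset.range n, (∫ t in s j..s (j+1), |φ t|) ≤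
      ∑ j ∈ Finset.range n, (|∫ t in s j..s (j+1), φ t| + 2 * ε0 * L) :=
    Finset.sum_le_sum (fun j hj => key1 j (Finset.mem_range.mp hj))
  have hsum_const : ∑ _j ∈ Finset.range n, 2 * ε0 * L = 2 * ε0 * (d - c) := by
    rw [Finset.sum_const, Finset.card_range, nsmul_eq_mul, hLdef]
    field_simp
  have hε0dc : 2 * ε0 * (d - c) = ε / 4 := by
    rw [hε0def]; field_simp; ring
  rw [Finset.sum_add_distrib, hsum_const, hε0dc] at sum2
  rw [Finset.sum_sub_distrib, adjsub] at sum1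
  rw [adjφ] at sum2
  linarith


lemma ii_of_mem {a b u v : ℝ} (ψ : ℝ → ℝ) (h : IntegrableOn ψ (Ioc a b))
    (hu : u ∈ Icc a b) (hv : v ∈ Icc a b) : IntervalIntegrable ψ volume u v := by
  rcases le_total u v with h' | h'
  · rw [intervalIntegrable_iff_integrableOn_Ioc_of_le h']
    exact h.mono_set (Ioc_subset_Ioc hu.1 hv.2)
  · exact ((intervalIntegrable_iff_integrableOn_Ioc_of_le h').mpr
      (h.mono_set (Ioc_subset_Ioc hv.1 hu.2))).symm

lemma prim_mono' {u v t : ℝ} (ψ : ℝ → ℝ) (habs : IntegrableOn (fun x => |ψ x|) (Ioc u v))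
    (hut : u ≤ t) (htv : t ≤ v) : (∫ x in u..t, |ψ x|) ≤ ∫ x in u..v, |ψ x| := by
  rw [intervalIntegral.integral_of_le hut, intervalIntegral.integral_of_le (hut.trans htv)]
  exact setIntegral_mono_set habs (Eventually.of_forall fun x => abs_nonneg _)
    ((Ioc_subset_Ioc le_rfl htv).eventuallyLE)

lemma small_increment (a b : ℝ) (hab : a ≤ b) (ψ : ℝ → ℝ) (hψ : IntegrableOn ψ (Ioc a b))
    (ε : ℝ) (hε : 0 < ε) :
    ∃ δ > 0, ∀ u v : ℝ, a ≤ u → u ≤ v → v ≤ b → v - u < δ → (∫ t in u..v, |ψ t|) < ε := by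
  have habs : IntegrableOn (fun t => |ψ t|) (Ioc a b) := hψ.abs
  have hIcc : IntegrableOn (fun t => |ψ t|) (Icc a b) :=
    (integrableOn_Icc_iff_integrableOn_Ioc).mpr habs
  have hcont : ContinuousOn (fun x => ∫ t in Ioc a x, |ψ t|) (Icc a b) :=
    intervalIntegral.continuousOn_primitive hIcc
  obtain ⟨δ, hδpos, Hδ⟩ := Metric.uniformContinuousOn_iff.mp
    ((isCompact_Icc : IsCompact (Icc a b)).uniformContinuousOn_of_continuous hcont) ε hε
  refine ⟨δ, hδpos, fun u v hau huv hvb hd => ?_⟩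
  have hu : u ∈ Icc a b := ⟨hau, huv.trans hvb⟩
  have hv : v ∈ Icc a b := ⟨hau.trans huv, hvb⟩
  have hdist : dist v u < δ := by
    rw [Real.dist_eq, abs_of_nonneg (by linarith)]; exact hd
  have key := Hδ v hv u hu hdist
  rw [Real.dist_eq] at key
  have hii : ∀ w ∈ Icc a b, IntervalIntegrable (fun t => |ψ t|) volume a w := fun w hw =>
    ii_of_mem _ habs (left_mem_Icc.mpr hab) hw
  have hsplit : (∫ t in u..v, |ψ t|) = (∫ t in Ioc a v, |ψ t|) - ∫ t in Ioc a u, |ψ t| := by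
    rw [← intervalIntegral.integral_of_le hu.1, ← intervalIntegral.integral_of_le hv.1,
      intervalIntegral.integral_interval_sub_left (hii v hv) (hii u hu)]
  rw [hsplit]
  calc (∫ t in Ioc a v, |ψ t|) - (∫ t in Ioc a u, |ψ t|) ≤
      |(∫ t in Ioc a v, |ψ t|) - (∫ t in Ioc a u, |ψ t|)| := le_abs_self _
  _ < ε := key

lemma rep_cont (a b : ℝ) (g g' : ℝ → ℝ) (hgint : IntegrableOn g' (Ioc a b))
    (hgrep : ∀ x ∈ Icc a b, g x = g a + ∫ t in a..x, g' t) : ContinuousOn g (Icc a b) := by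
  have hIcc : IntegrableOn g' (Icc a b) := (integrableOn_Icc_iff_integrableOn_Ioc).mpr hgint
  have h1 : ContinuousOn (fun x => g a + ∫ t in Ioc a x, g' t) (Icc a b) :=
    continuousOn_const.add (intervalIntegral.continuousOn_primitive hIcc)
  refine h1.congr fun x hx => ?_
  rw [hgrep x hx, intervalIntegral.integral_of_le hx.1]


lemma abs_interval_le {a b lo hi u v : ℝ} (ψ : ℝ → ℝ) (h : IntegrableOn ψ (Ioc a b))
    (hlo : lo ∈ Icc a b) (hhi : hi ∈ Icc a b) (hu : u ∈ Icc lo hi) (hv : v ∈ Icc lo hi) :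
    |∫ t in u..v, ψ t| ≤ ∫ t in lo..hi, |ψ t| := by
  have habs : IntegrableOn (fun t => |ψ t|) (Ioc a b) := h.abs
  have hlohi : lo ≤ hi := hu.1.trans hu.2
  have key : ∀ p q : ℝ, p ∈ Icc lo hi → q ∈ Icc lo hi → p ≤ q →
      |∫ t in p..q, ψ t| ≤ ∫ t in lo..hi, |ψ t| := by
    intro p q hp hq hpq
    calc |∫ t in p..q, ψ t| ≤ ∫ t in p..q, |ψ t| :=
        intervalIntegral.abs_integral_le_integral_abs hpq
    _ ≤ ∫ t in lo..hi, |ψ t| := by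
        rw [intervalIntegral.integral_of_le hpq, intervalIntegral.integral_of_le hlohi]
        refine setIntegral_mono_set (habs.mono_set (Ioc_subset_Ioc hlo.1 hhi.2))
          (Eventually.of_forall fun x => abs_nonneg _)
          ((Ioc_subset_Ioc hp.1 hq.2).eventuallyLE)
  rcases le_total u v with h' | h'
  · exact key u v hu hv h'
  · rw [intervalIntegral.integral_symm, abs_neg]
    exact key v u hv hu h'

set_option maxHeartbeats 2000000 in
lemma core (a b : ℝ) (f : ℕ → ℝ → ℝ) (f' : ℕ → ℝ → ℝ) (g g' : ℝ → ℝ)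
    (hfint : ∀ k, IntegrableOn (f' k) (Set.Ioc a b))
    (hfrep : ∀ k, ∀ x ∈ Set.Icc a b, f k x = f k a + ∫ t in a..x, f' k t)
    (hgint : IntegrableOn g' (Set.Ioc a b))
    (hgrep : ∀ x ∈ Set.Icc a b, g x = g a + ∫ t in a..x, g' t)
    (hL1 : Tendsto (fun k => ∫ x in Set.Ioo a b, |f k x - g x|) atTop (nhds 0))
    (c d η ε : ℝ) (hac : a ≤ c) (hcd : c < d) (hη : 0 < η) (hdb : d + η ≤ b) (hε : 0 < ε) :
    ∀ᶠ k in atTop, (∫ t in Ioo c d, |g' t|) - ε ≤ ∫ t in Ioo c (d + η), |f' k t| := by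
  have hab : a ≤ b := by linarith
  have hdb' : d ≤ b := by linarith
  have hcb : c ≤ b := by linarith
  -- step approximation of the variation of g on (c,d)
  obtain ⟨n, hnpos, hstep⟩ := stepApprox c d hcd g'
    (hgint.mono_set (Ioc_subset_Ioc hac hdb')) (ε / 2) (by positivity)
  have hnR : (0:ℝ) < n := Nat.cast_pos.mpr hnpos
  set s : ℕ → ℝ := pt c d n with hsdef
  have hsmem : ∀ j ≤ n, s j ∈ Icc c d := fun j hj => pt_mem c d hcd.le hnpos.ne' hj
  have hsmemab : ∀ j ≤ n, s j ∈ Icc a b := fun j hj =>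
    Icc_subset_Icc hac hdb' (hsmem j hj)
  have hsle : ∀ j, s j ≤ s (j + 1) := fun j => pt_mono c d hcd.le n (Nat.le_succ j)
  -- choose window size
  obtain ⟨δ, hδpos, Hδ⟩ := small_increment a b hab g' hgint (ε / (8 * n)) (by positivity)
  set η' : ℝ := min η (δ / 2) with hη'def
  have hη'pos : 0 < η' := lt_min hη (by positivity)
  have hη'η : η' ≤ η := min_le_left _ _
  have hη'δ : η' < δ := lt_of_le_of_lt (min_le_right _ _) (by linarith)
  have hwin : ∀ j ≤ n, s j + η' ≤ b := fun j hj => by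
    have := (hsmem j hj).2; linarith [hη'η]
  have hwinIcc : ∀ j ≤ n, ∀ t ∈ Icc (s j) (s j + η'), t ∈ Icc a b := fun j hj t ht =>
    ⟨le_trans (hsmemab j hj).1 ht.1, le_trans ht.2 (hwin j hj)⟩
  have habs' : IntegrableOn (fun x => |g' x|) (Ioc a b) := hgint.abs
  -- continuity of g and f k on [a,b]
  have hgcont : ContinuousOn g (Icc a b) := rep_cont a b g g' hgint hgrep
  have hfcont : ∀ k, ContinuousOn (f k) (Icc a b) := fun k =>
    rep_cont a b (f k) (f' k) (hfint k) (hfrep k)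
  -- window averages of g are close to values of g
  have hgwin : ∀ j ≤ n, |(∫ t in s j..(s j + η'), g t) / η' - g (s j)| ≤ ε / (8 * n) := by
    intro j hj
    have hptw : ∀ t ∈ Icc (s j) (s j + η'), |g t - g (s j)| ≤ ε / (8 * n) := by
      intro t ht
      have htab : t ∈ Icc a b := hwinIcc j hj t ht
      have e1 : g t - g (s j) = ∫ u in (s j)..t, g' u := by
        rw [hgrep t htab, hgrep (s j) (hsmemab j hj)]
        rw [add_sub_add_left_eq_sub,
          intervalIntegral.integral_interval_sub_left
            (ii_of_mem g' hgint (left_mem_Icc.mpr hab) htab)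
            (ii_of_mem g' hgint (left_mem_Icc.mpr hab) (hsmemab j hj))]
      rw [e1]
      calc |∫ u in (s j)..t, g' u| ≤ ∫ u in (s j)..t, |g' u| :=
          intervalIntegral.abs_integral_le_integral_abs ht.1
      _ ≤ ∫ u in (s j)..(s j + η'), |g' u| := by
          refine prim_mono' g' ?_ ht.1 ht.2
          exact habs'.mono_set (Ioc_subset_Ioc (hsmemab j hj).1 (hwin j hj))
      _ ≤ ε / (8 * n) :=
          (Hδ (s j) (s j + η') (hsmemab j hj).1 (by linarith) (hwin j hj) (by linarith)).le
    have hgii : IntervalIntegrable g volume (s j) (s j + η') := by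
      apply ContinuousOn.intervalIntegrable
      refine hgcont.mono ?_
      rw [uIcc_of_le (by linarith)]
      exact fun t ht => hwinIcc j hj t ht
    have e2 : (∫ t in s j..(s j + η'), g t) - g (s j) * η' =
        ∫ t in s j..(s j + η'), (g t - g (s j)) := by
      rw [intervalIntegral.integral_sub hgii intervalIntegrable_const,
        intervalIntegral.integral_const]
      simp only [add_sub_cancel_left, smul_eq_mul]
      ring
    have e3 : |∫ t in s j..(s j + η'), (g t - g (s j))| ≤ (ε / (8 * n)) * η' := by
      calc |∫ t in s j..(s j + η'), (g t - g (s j))| ≤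
          ∫ t in s j..(s j + η'), |g t - g (s j)| :=
            intervalIntegral.abs_integral_le_integral_abs (by linarith)
      _ ≤ ∫ t in s j..(s j + η'), (fun _ => ε / (8 * n)) t := by
          refine intervalIntegral.integral_mono_on (by linarith) ?_ intervalIntegrable_const hptw
          exact (hgii.sub intervalIntegrable_const).abs
      _ = (ε / (8 * n)) * η' := by
          rw [intervalIntegral.integral_const, add_sub_cancel_left, smul_eq_mul, mul_comm]
    have e4 : (∫ t in s j..(s j + η'), g t) / η' - g (s j) =
        ((∫ t in s j..(s j + η'), g t) - g (s j) * η') / η' := by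
      field_simp
    rw [e4, abs_div, abs_of_pos hη'pos, div_le_iff₀ hη'pos, e2]
    exact e3
  -- integrability of |f k - g| on Ioo a b
  have hfgInt : ∀ k, IntegrableOn (fun x => |f k x - g x|) (Ioo a b) := fun k =>
    (((hfcont k).sub hgcont).abs.integrableOn_Icc).mono_set Ioo_subset_Icc_self
  -- window averages of f k converge to window averages of g
  have hAtend : ∀ j ≤ n, Tendsto (fun k => (∫ t in s j..(s j + η'), f k t) / η') atTop
      (nhds ((∫ t in s j..(s j + η'), g t) / η')) := by
    intro j hj
    have hgii : IntervalIntegrable g volume (s j) (s j + η') := by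
      apply ContinuousOn.intervalIntegrable
      refine hgcont.mono ?_
      rw [uIcc_of_le (by linarith)]
      exact fun t ht => hwinIcc j hj t ht
    rw [tendsto_iff_dist_tendsto_zero]
    refine squeeze_zero (fun k => dist_nonneg) (fun k => ?_)
      (by simpa using hL1.const_mul (1 / η'))
    have hfii : IntervalIntegrable (f k) volume (s j) (s j + η') := by
      apply ContinuousOn.intervalIntegrable
      refine (hfcont k).mono ?_
      rw [uIcc_of_le (by linarith)]
      exact fun t ht => hwinIcc j hj t ht
    rw [Real.dist_eq, div_sub_div_same, abs_div, abs_of_pos hη'pos,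
      ← intervalIntegral.integral_sub hfii hgii]
    rw [div_le_iff₀ hη'pos]
    have h1 : |∫ t in s j..(s j + η'), (f k t - g t)| ≤
        ∫ t in s j..(s j + η'), |f k t - g t| :=
      intervalIntegral.abs_integral_le_integral_abs (by linarith)
    have h2 : (∫ t in s j..(s j + η'), |f k t - g t|) ≤ ∫ x in Ioo a b, |f k x - g x| := by
      rw [intervalIntegral.integral_of_le (by linarith : s j ≤ s j + η'),
        integral_Ioc_eq_integral_Ioo]
      refine setIntegral_mono_set (hfgInt k) (Eventually.of_forall fun x => abs_nonneg _) ?_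
      refine (Ioo_subset_Ioo ?_ ?_).eventuallyLE
      · exact (hsmemab j hj).1
      · exact hwin j hj
    calc |∫ t in s j..(s j + η'), (f k t - g t)| ≤ ∫ x in Ioo a b, |f k x - g x| := h1.trans h2
    _ = (η'⁻¹ * ∫ x in Ioo a b, |f k x - g x|) * η' := by field_simp
  -- the sums of window-average differences converge
  have hSB : Tendsto (fun k => ∑ j ∈ Finset.range n,
      |(∫ t in s (j+1)..(s (j+1) + η'), f k t) / η' - (∫ t in s j..(s j + η'), f k t) / η'|)
      atTop (nhds (∑ j ∈ Finset.range n,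
      |(∫ t in s (j+1)..(s (j+1) + η'), g t) / η' - (∫ t in s j..(s j + η'), g t) / η'|)) := by
    refine tendsto_finset_sum _ (fun j hj => ?_)
    have hj' := Finset.mem_range.mp hj
    exact ((hAtend (j+1) hj').sub (hAtend j hj'.le)).abs
  -- lower bound for the limit sum
  have hBg : (∫ t in Ioo c d, |g' t|) - ε / 2 - ε / 4 ≤ ∑ j ∈ Finset.range n,
      |(∫ t in s (j+1)..(s (j+1) + η'), g t) / η' - (∫ t in s j..(s j + η'), g t) / η'| := by
    have hterm : ∀ j < n, |g (s (j+1)) - g (s j)| - (ε / (8*n) + ε / (8*n)) ≤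
        |(∫ t in s (j+1)..(s (j+1) + η'), g t) / η' - (∫ t in s j..(s j + η'), g t) / η'| := by
      intro j hj
      have h1 := hgwin (j+1) hj
      have h2 := hgwin j hj.le
      have := abs_sub_abs_le_abs_sub (g (s (j+1)) - g (s j))
        ((∫ t in s (j+1)..(s (j+1) + η'), g t) / η' - (∫ t in s j..(s j + η'), g t) / η')
      have h3 : |(g (s (j+1)) - g (s j)) -
          ((∫ t in s (j+1)..(s (j+1) + η'), g t) / η' - (∫ t in s j..(s j + η'), g t) / η')| ≤
          ε / (8*n) + ε / (8*n) := by
        have h4 : (g (s (j+1)) - g (s j)) -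
            ((∫ t in s (j+1)..(s (j+1) + η'), g t) / η' - (∫ t in s j..(s j + η'), g t) / η') =
            (g (s (j+1)) - (∫ t in s (j+1)..(s (j+1) + η'), g t) / η') -
            (g (s j) - (∫ t in s j..(s j + η'), g t) / η') := by ring
        rw [h4]
        refine (abs_sub _ _).trans ?_
        rw [abs_sub_comm (g (s (j+1))) _, abs_sub_comm (g (s j)) _]
        exact add_le_add h1 h2
      linarith
    have hsum := Finset.sum_le_sum (fun j hj => hterm j (Finset.mem_range.mp hj))
    rw [Finset.sum_sub_distrib, Finset.sum_const, Finset.card_range] at hsum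
    have hconst : (n : ℝ) • (ε / (8*n) + ε / (8*n)) = ε / 4 := by
      rw [smul_eq_mul]
      field_simp
      ring
    rw [nsmul_eq_mul] at hsum
    rw [show ((n : ℝ) * (ε / (8*↑n) + ε / (8*↑n))) = ε / 4 by field_simp; ring] at hsum
    have hgsum : ∑ j ∈ Finset.range n, |g (s (j+1)) - g (s j)| =
        ∑ j ∈ Finset.range n, |∫ t in s j..s (j+1), g' t| := by
      refine Finset.sum_congr rfl (fun j hj => ?_)
      have hj' := Finset.mem_range.mp hj
      congr 1
      rw [hgrep (s (j+1)) (hsmemab (j+1) hj'), hgrep (s j) (hsmemab j hj'.le),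
        add_sub_add_left_eq_sub,
        intervalIntegral.integral_interval_sub_left
          (ii_of_mem g' hgint (left_mem_Icc.mpr hab) (hsmemab (j+1) hj'))
          (ii_of_mem g' hgint (left_mem_Icc.mpr hab) (hsmemab j hj'.le))]
    rw [hgsum] at hsum
    linarith
  -- per-k bound: the window-average sum is at most the variation integral of f' k
  have hkey : ∀ k, ∑ j ∈ Finset.range n,
      |(∫ t in s (j+1)..(s (j+1) + η'), f k t) / η' - (∫ t in s j..(s j + η'), f k t) / η'| ≤
      ∫ t in Ioo c (d + η), |f' k t| := by
    intro k
    have habsf : IntegrableOn (fun u => |f' k u|) (Ioc a b) := (hfint k).abs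
    have hfii : ∀ w ∈ Icc a b, IntervalIntegrable (f' k) volume a w := fun w hw =>
      ii_of_mem _ (hfint k) (left_mem_Icc.mpr hab) hw
    have hfaii : ∀ w ∈ Icc a b, IntervalIntegrable (fun u => |f' k u|) volume a w := fun w hw =>
      ii_of_mem _ habsf (left_mem_Icc.mpr hab) hw
    set P : ℝ → ℝ := fun t => ∫ u in a..t, f' k u with hPdef
    set Q : ℝ → ℝ := fun t => ∫ u in a..t, |f' k u| with hQdef
    have hPcont : ContinuousOn P (Icc a b) := by
      have h1 := intervalIntegral.continuousOn_primitive
        ((integrableOn_Icc_iff_integrableOn_Ioc).mpr (hfint k))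
      refine h1.congr fun x hx => ?_
      rw [hPdef]
      simp only
      rw [intervalIntegral.integral_of_le hx.1]
    have hQcont : ContinuousOn Q (Icc a b) := by
      have h1 := intervalIntegral.continuousOn_primitive
        ((integrableOn_Icc_iff_integrableOn_Ioc).mpr habsf)
      refine h1.congr fun x hx => ?_
      rw [hQdef]
      simp only
      rw [intervalIntegral.integral_of_le hx.1]
    have hPQ : ∀ u v, u ∈ Icc a b → v ∈ Icc a b → u ≤ v → |P v - P u| ≤ Q v - Q u := by
      intro u v hu hv huv
      have e1 : P v - P u = ∫ t in u..v, f' k t :=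
        intervalIntegral.integral_interval_sub_left (hfii v hv) (hfii u hu)
      have e2 : Q v - Q u = ∫ t in u..v, |f' k t| :=
        intervalIntegral.integral_interval_sub_left (hfaii v hv) (hfaii u hu)
      rw [e1, e2]
      exact intervalIntegral.abs_integral_le_integral_abs huv
    have hQmono : ∀ u v, u ∈ Icc a b → v ∈ Icc a b → u ≤ v → Q u ≤ Q v := by
      intro u v hu hv huv
      have := hPQ u v hu hv huv
      have h0 := abs_nonneg (P v - P u)
      linarith
    -- express window averages via P
    have hAP : ∀ j ≤ n, (∫ t in s j..(s j + η'), f k t) =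
        f k a * η' + ∫ w in (0:ℝ)..η', P (w + s j) := by
      intro j hj
      have hcongr : (∫ t in s j..(s j + η'), f k t) =
          ∫ t in s j..(s j + η'), (f k a + P t) := by
        refine intervalIntegral.integral_congr fun t ht => ?_
        rw [uIcc_of_le (by linarith)] at ht
        exact hfrep k t (hwinIcc j hj t ht)
      have hPii : IntervalIntegrable P volume (s j) (s j + η') := by
        apply ContinuousOn.intervalIntegrable
        refine hPcont.mono ?_
        rw [uIcc_of_le (by linarith)]
        exact fun t ht => hwinIcc j hj t ht
      rw [hcongr, intervalIntegral.integral_add intervalIntegrable_const hPii,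
        intervalIntegral.integral_const, add_sub_cancel_left, smul_eq_mul, mul_comm]
      congr 1
      rw [intervalIntegral.integral_comp_add_right P (s j), zero_add, add_comm η' (s j)]
    -- difference formula
    have hdiff : ∀ j < n, (∫ t in s (j+1)..(s (j+1) + η'), f k t) / η' -
        (∫ t in s j..(s j + η'), f k t) / η' =
        (∫ w in (0:ℝ)..η', (P (w + s (j+1)) - P (w + s j))) / η' := by
      intro j hj
      have hPii1 : IntervalIntegrable (fun w => P (w + s (j+1))) volume 0 η' := by
        apply ContinuousOn.intervalIntegrable
        refine (hPcont.comp ((continuous_add_right _).continuousOn) ?_)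
        rw [uIcc_of_le hη'pos.le]
        intro w hw
        exact hwinIcc (j+1) hj (w + s (j+1)) ⟨by linarith [hw.1], by linarith [hw.2]⟩
      have hPii0 : IntervalIntegrable (fun w => P (w + s j)) volume 0 η' := by
        apply ContinuousOn.intervalIntegrable
        refine (hPcont.comp ((continuous_add_right _).continuousOn) ?_)
        rw [uIcc_of_le hη'pos.le]
        intro w hw
        exact hwinIcc j hj.le (w + s j) ⟨by linarith [hw.1], by linarith [hw.2]⟩
      rw [hAP (j+1) hj, hAP j hj.le, intervalIntegral.integral_sub hPii1 hPii0]
      field_simp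
      ring
    -- bound each difference
    have hterm : ∀ j < n, |(∫ t in s (j+1)..(s (j+1) + η'), f k t) / η' -
        (∫ t in s j..(s j + η'), f k t) / η'| ≤
        (∫ w in (0:ℝ)..η', (Q (w + s (j+1)) - Q (w + s j))) / η' := by
      intro j hj
      rw [hdiff j hj, abs_div, abs_of_pos hη'pos, div_le_div_iff_of_pos_right hη'pos]
      have hmemw : ∀ i, i ≤ n → ∀ w ∈ Icc (0:ℝ) η', w + s i ∈ Icc a b := fun i hi w hw =>
        hwinIcc i hi (w + s i) ⟨by linarith [hw.1], by linarith [hw.2]⟩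
      have hPc1 : ContinuousOn (fun w => P (w + s (j+1)) - P (w + s j)) (Icc 0 η') := by
        refine ContinuousOn.sub ?_ ?_
        · exact hPcont.comp ((continuous_add_right _).continuousOn) (hmemw (j+1) hj)
        · exact hPcont.comp ((continuous_add_right _).continuousOn) (hmemw j hj.le)
      have hQc1 : ContinuousOn (fun w => Q (w + s (j+1)) - Q (w + s j)) (Icc 0 η') := by
        refine ContinuousOn.sub ?_ ?_
        · exact hQcont.comp ((continuous_add_right _).continuousOn) (hmemw (j+1) hj)
        · exact hQcont.comp ((continuous_add_right _).continuousOn) (hmemw j hj.le)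
      calc |∫ w in (0:ℝ)..η', (P (w + s (j+1)) - P (w + s j))| ≤
          ∫ w in (0:ℝ)..η', |P (w + s (j+1)) - P (w + s j)| :=
            intervalIntegral.abs_integral_le_integral_abs hη'pos.le
      _ ≤ ∫ w in (0:ℝ)..η', (Q (w + s (j+1)) - Q (w + s j)) := by
          refine intervalIntegral.integral_mono_on hη'pos.le ?_ ?_ ?_
          · apply ContinuousOn.intervalIntegrable
            rw [uIcc_of_le hη'pos.le]
            exact hPc1.abs
          · apply ContinuousOn.intervalIntegrable
            rw [uIcc_of_le hη'pos.le]
            exact hQc1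
          · intro w hw
            refine hPQ (w + s j) (w + s (j+1)) (hmemw j hj.le w hw) (hmemw (j+1) hj w hw) ?_
            have := hsle j
            linarith
    -- sum up and telescope
    have hsum := Finset.sum_le_sum (fun j hj => hterm j (Finset.mem_range.mp hj))
    refine hsum.trans ?_
    have hQii : ∀ i ≤ n, IntervalIntegrable (fun w => Q (w + s i)) volume 0 η' := by
      intro i hi
      apply ContinuousOn.intervalIntegrable
      rw [uIcc_of_le hη'pos.le]
      exact hQcont.comp ((continuous_add_right _).continuousOn)
        (fun w hw => hwinIcc i hi (w + s i) ⟨by linarith [hw.1], by linarith [hw.2]⟩)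
    have hswap : ∑ j ∈ Finset.range n,
        (∫ w in (0:ℝ)..η', (Q (w + s (j+1)) - Q (w + s j))) / η' =
        (∫ w in (0:ℝ)..η', (Q (w + d) - Q (w + c))) / η' := by
      rw [← Finset.sum_div]
      congr 1
      rw [← intervalIntegral.integral_finset_sum]
      · congr 1
        ext w
        rw [Finset.sum_range_sub (fun j => Q (w + s j))]
        rw [hsdef, pt_zero, pt_last c d hnpos.ne']
      · intro j hj
        exact (hQii (j+1) (Finset.mem_range.mp hj)).sub (hQii j (Finset.mem_range.mp hj).le)
    rw [hswap]
    have hdη' : d + η' ∈ Icc a b := ⟨by linarith, by linarith⟩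
    have hcab : c ∈ Icc a b := ⟨hac, hcb⟩
    have hptbound : ∀ w ∈ Icc (0:ℝ) η', Q (w + d) - Q (w + c) ≤ Q (d + η') - Q c := by
      intro w hw
      have h1 : Q (w + d) ≤ Q (d + η') := by
        refine hQmono (w + d) (d + η') ⟨by linarith [hw.1], by linarith [hw.2]⟩ hdη'
          (by linarith [hw.2])
      have h2 : Q c ≤ Q (w + c) := by
        refine hQmono c (w + c) hcab ⟨by linarith [hw.1], by linarith [hw.2]⟩
          (by linarith [hw.1])
      linarith
    have hint1 : (∫ w in (0:ℝ)..η', (Q (w + d) - Q (w + c))) ≤ (Q (d + η') - Q c) * η' := by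
      have hdii : IntervalIntegrable (fun w => Q (w + d)) volume 0 η' := by
        apply ContinuousOn.intervalIntegrable
        rw [uIcc_of_le hη'pos.le]
        exact hQcont.comp ((continuous_add_right _).continuousOn)
          (fun w hw => ⟨by linarith [hw.1, hcd.le], by linarith [hw.2]⟩)
      have hcii : IntervalIntegrable (fun w => Q (w + c)) volume 0 η' := by
        apply ContinuousOn.intervalIntegrable
        rw [uIcc_of_le hη'pos.le]
        exact hQcont.comp ((continuous_add_right _).continuousOn)
          (fun w hw => ⟨by linarith [hw.1], by linarith [hw.2]⟩)
      have := intervalIntegral.integral_mono_on hη'pos.le (hdii.sub hcii)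
        intervalIntegrable_const hptbound
      rwa [intervalIntegral.integral_const, sub_zero, smul_eq_mul, mul_comm] at this
    have hQfin : Q (d + η') - Q c = ∫ t in Ioo c (d + η'), |f' k t| := by
      rw [intervalIntegral.integral_interval_sub_left (hfaii (d + η') hdη') (hfaii c hcab),
        intervalIntegral.integral_of_le (by linarith : c ≤ d + η'),
        integral_Ioc_eq_integral_Ioo]
    have hmonoset : (∫ t in Ioo c (d + η'), |f' k t|) ≤ ∫ t in Ioo c (d + η), |f' k t| := by
      refine setIntegral_mono_set (habsf.mono_set ?_)
        (Eventually.of_forall fun x => abs_nonneg _) ((Ioo_subset_Ioo le_rfl (by linarith)).eventuallyLE)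
      exact fun t ht => ⟨lt_of_le_of_lt hac ht.1, by linarith [ht.2]⟩
    calc (∫ w in (0:ℝ)..η', (Q (w + d) - Q (w + c))) / η' ≤ Q (d + η') - Q c := by
          rw [div_le_iff₀ hη'pos]; exact hint1
    _ = ∫ t in Ioo c (d + η'), |f' k t| := hQfin
    _ ≤ ∫ t in Ioo c (d + η), |f' k t| := hmonoset
  -- conclusion
  have hlt : (∫ t in Ioo c d, |g' t|) - ε <
      ∑ j ∈ Finset.range n,
      |(∫ t in s (j+1)..(s (j+1) + η'), g t) / η' - (∫ t in s j..(s j + η'), g t) / η'| := by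
    linarith
  filter_upwards [hSB.eventually (eventually_gt_nhds hlt)] with k hk
  exact le_of_lt (lt_of_lt_of_le hk (hkey k))


set_option maxHeartbeats 1000000 in
lemma pointwiseTV (a b : ℝ) (hab : a < b) (f : ℕ → ℝ → ℝ) (f' : ℕ → ℝ → ℝ) (g g' : ℝ → ℝ)
    (hfint : ∀ k, IntegrableOn (f' k) (Set.Ioc a b))
    (hfrep : ∀ k, ∀ x ∈ Set.Icc a b, f k x = f k a + ∫ t in a..x, f' k t)
    (hgint : IntegrableOn g' (Set.Ioc a b))
    (hgrep : ∀ x ∈ Set.Icc a b, g x = g a + ∫ t in a..x, g' t)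
    (hL1 : Tendsto (fun k => ∫ x in Set.Ioo a b, |f k x - g x|) atTop (nhds 0))
    (hTV : Tendsto (fun k => ∫ x in Set.Ioo a b, |f' k x|) atTop
      (nhds (∫ x in Set.Ioo a b, |g' x|)))
    (x : ℝ) (hx : x ∈ Icc a b) :
    Tendsto (fun k => ∫ t in a..x, |f' k t|) atTop (nhds (∫ t in a..x, |g' t|)) := by
  have conv : ∀ (ψ : ℝ → ℝ) (u v : ℝ), u ≤ v →
      (∫ t in u..v, |ψ t|) = ∫ t in Ioo u v, |ψ t| := fun ψ u v huv => by
    rw [intervalIntegral.integral_of_le huv, integral_Ioc_eq_integral_Ioo]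
  have hgii : ∀ w ∈ Icc a b, IntervalIntegrable (fun t => |g' t|) volume a w := fun w hw =>
    ii_of_mem _ hgint.abs (left_mem_Icc.mpr hab.le) hw
  have hfii : ∀ k, ∀ w ∈ Icc a b, IntervalIntegrable (fun t => |f' k t|) volume a w :=
    fun k w hw => ii_of_mem _ (hfint k).abs (left_mem_Icc.mpr hab.le) hw
  have hTVb : Tendsto (fun k => ∫ t in a..b, |f' k t|) atTop (nhds (∫ t in a..b, |g' t|)) := by
    have h0 := hTV
    rw [← conv g' a b hab.le] at h0
    exact h0.congr fun k => (conv (f' k) a b hab.le).symm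
  rcases eq_or_lt_of_le hx.1 with heq | hax
  · simp only [← heq, intervalIntegral.integral_same]
    exact tendsto_const_nhds
  refine Metric.tendsto_nhds.mpr fun ε hε => ?_
  obtain ⟨δ, hδpos, Hδ⟩ := small_increment a b hab.le g' hgint (ε / 4) (by positivity)
  -- lower bound eventuality
  have hlow : ∀ᶠ k in atTop, (∫ t in a..x, |g' t|) - ε / 2 < ∫ t in a..x, |f' k t| := by
    set y : ℝ := max ((a + x) / 2) (x - δ / 2) with hydef
    have hay : a < y := lt_max_of_lt_left (by linarith)
    have hyx : y < x := max_lt (by linarith) (by linarith)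
    have hyb : y ≤ b := by linarith [hx.2]
    have hVgy : (∫ t in a..x, |g' t|) - (∫ t in a..y, |g' t|) < ε / 4 := by
      rw [intervalIntegral.integral_interval_sub_left (hgii x hx) (hgii y ⟨hay.le, hyb⟩)]
      refine Hδ y x hay.le hyx.le hx.2 ?_
      have : x - δ / 2 ≤ y := le_max_right _ _
      linarith
    have hcore := core a b f f' g g' hfint hfrep hgint hgrep hL1 a y (x - y) (ε / 4)
      le_rfl hay (by linarith) (by linarith [hx.2]) (by positivity)
    have hyxy : y + (x - y) = x := by ring
    rw [hyxy] at hcore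
    filter_upwards [hcore] with k hk
    rw [conv (f' k) a x hx.1, conv g' a y (by linarith)] at *
    linarith
  -- upper bound eventuality
  have hup : ∀ᶠ k in atTop, (∫ t in a..x, |f' k t|) < (∫ t in a..x, |g' t|) + ε := by
    rcases eq_or_lt_of_le hx.2 with hxb | hxb
    · -- x = b
      subst hxb
      filter_upwards [hTVb.eventually (eventually_lt_nhds
        (by linarith : (∫ t in a..x, |g' t|) < (∫ t in a..x, |g' t|) + ε))] with k hk
      exact hk
    · set z : ℝ := max ((x + b) / 2) (b - δ / 2) with hzdef
      have hxz : x < z := lt_max_of_lt_left (by linarith)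
      have hzb : z < b := max_lt (by linarith) (by linarith)
      have haz : a ≤ z := by linarith [hx.1]
      have hVgz : (∫ t in a..b, |g' t|) - (∫ t in a..z, |g' t|) < ε / 4 := by
        rw [intervalIntegral.integral_interval_sub_left (hgii b (right_mem_Icc.mpr hab.le))
          (hgii z ⟨haz, hzb.le⟩)]
        refine Hδ z b haz hzb.le le_rfl ?_
        have : b - δ / 2 ≤ z := le_max_right _ _
        linarith
      have hcore := core a b f f' g g' hfint hfrep hgint hgrep hL1 x z ((b - z) / 2) (ε / 4)
        hx.1 hxz (by linarith) (by linarith) (by positivity)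
      have hmono : ∀ k, (∫ t in Ioo x (z + (b - z) / 2), |f' k t|) ≤ ∫ t in Ioo x b, |f' k t| := by
        intro k
        have habsf : IntegrableOn (fun t => |f' k t|) (Ioc a b) := (hfint k).abs
        refine setIntegral_mono_set (habsf.mono_set
          (fun w hw => ⟨lt_of_le_of_lt hx.1 hw.1, hw.2.le⟩))
          (Eventually.of_forall fun w => abs_nonneg _)
          ((Ioo_subset_Ioo le_rfl (by linarith)).eventuallyLE)
      have hsplit : ∀ k, (∫ t in Ioo x b, |f' k t|) =
          (∫ t in a..b, |f' k t|) - ∫ t in a..x, |f' k t| := by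
        intro k
        rw [intervalIntegral.integral_interval_sub_left
          (hfii k b (right_mem_Icc.mpr hab.le)) (hfii k x hx),
          conv (f' k) x b hx.2]
      have hVgsplit : (∫ t in Ioo x z, |g' t|) =
          (∫ t in a..z, |g' t|) - ∫ t in a..x, |g' t| := by
        rw [intervalIntegral.integral_interval_sub_left (hgii z ⟨haz, hzb.le⟩) (hgii x hx),
          conv g' x z hxz.le]
      filter_upwards [hcore, hTVb.eventually (eventually_lt_nhds
        (by linarith : (∫ t in a..b, |g' t|) < (∫ t in a..b, |g' t|) + ε / 4))] with k hk1 hk2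
      have h3 := (hk1.trans (hmono k))
      rw [hsplit k, hVgsplit] at h3
      linarith
  filter_upwards [hlow, hup] with k hk1 hk2
  rw [Real.dist_eq, abs_lt]
  constructor <;> linarith

end Stmt5Aux

open Stmt5Aux in
set_option maxHeartbeats 2000000 in
theorem stmt5 (a b : ℝ) (hab : a < b) (f : ℕ → ℝ → ℝ) (f' : ℕ → ℝ → ℝ)
    (g : ℝ → ℝ) (g' : ℝ → ℝ)
    (hfint : ∀ k, IntegrableOn (f' k) (Set.Ioo a b))
    (hfrep : ∀ k, ∀ x ∈ Set.Icc a b, f k x = f k a + ∫ t in a..x, f' k t)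
    (hgint : IntegrableOn g' (Set.Ioo a b))
    (hgrep : ∀ x ∈ Set.Icc a b, g x = g a + ∫ t in a..x, g' t)
    (hL1 : Tendsto (fun k => ∫ x in Set.Ioo a b, |f k x - g x|) atTop (nhds 0))
    (hTV : Tendsto (fun k => ∫ x in Set.Ioo a b, |f' k x|) atTop
      (nhds (∫ x in Set.Ioo a b, |g' x|))) :
    TendstoUniformlyOn f g atTop (Set.Ioo a b) := by
  have hfIoc : ∀ k, IntegrableOn (f' k) (Ioc a b) := fun k =>
    (integrableOn_Ioc_iff_integrableOn_Ioo).mpr (hfint k)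
  have hgIoc : IntegrableOn g' (Ioc a b) := (integrableOn_Ioc_iff_integrableOn_Ioo).mpr hgint
  have hpt := pointwiseTV a b hab f f' g g' hfIoc hfrep hgIoc hgrep hL1 hTV
  have hgii : ∀ w ∈ Icc a b, IntervalIntegrable (fun u => |g' u|) volume a w := fun w hw =>
    ii_of_mem _ hgIoc.abs (left_mem_Icc.mpr hab.le) hw
  have hfii : ∀ k, ∀ w ∈ Icc a b, IntervalIntegrable (fun u => |f' k u|) volume a w :=
    fun k w hw => ii_of_mem _ (hfIoc k).abs (left_mem_Icc.mpr hab.le) hw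
  have hgcont : ContinuousOn g (Icc a b) := rep_cont a b g g' hgIoc hgrep
  have hfcont : ∀ k, ContinuousOn (f k) (Icc a b) := fun k =>
    rep_cont a b (f k) (f' k) (hfIoc k) (hfrep k)
  have hfgInt : ∀ k, IntegrableOn (fun y => |f k y - g y|) (Icc a b) := fun k =>
    ((hfcont k).sub hgcont).abs.integrableOn_Icc
  rw [Metric.tendstoUniformlyOn_iff]
  intro ε hε
  obtain ⟨δ0, hδ0, Hδ0⟩ := small_increment a b hab.le g' hgIoc (ε / 8) (by positivity)
  obtain ⟨n₀, hn₀⟩ := exists_nat_gt ((b - a) / δ0)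
  set n : ℕ := n₀ + 1 with hndef
  have hnpos : 0 < n := Nat.succ_pos _
  have hnR : (0:ℝ) < n := Nat.cast_pos.mpr hnpos
  set L : ℝ := (b - a) / n with hLdef
  have hL : 0 < L := div_pos (by linarith) hnR
  have hLδ : L < δ0 := by
    rw [hLdef, div_lt_iff₀ hnR]
    have hgt : (b - a) / δ0 < n := lt_of_lt_of_le hn₀ (by exact_mod_cast Nat.le_succ n₀)
    calc b - a = ((b - a) / δ0) * δ0 := by field_simp
    _ < n * δ0 := mul_lt_mul_of_pos_right hgt hδ0
    _ = δ0 * n := mul_comm _ _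
  set t : ℕ → ℝ := pt a b n with htdef
  have ht_eq : ∀ j : ℕ, t j = a + j * L := fun j => by
    rw [htdef, hLdef]; rfl
  have htmem : ∀ i ≤ n, t i ∈ Icc a b := fun i hi => pt_mem a b hab.le hnpos.ne' hi
  have htL : ∀ i, t (i + 1) - t i = L := fun i => by
    rw [ht_eq (i+1), ht_eq i]; push_cast; ring
  -- eventualities
  have Enet : ∀ᶠ k in atTop, ∀ i ∈ Finset.range (n + 1),
      |(∫ u in a..t i, |f' k u|) - (∫ u in a..t i, |g' u|)| < ε / 8 := by
    rw [eventually_all_finset]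
    intro i hi
    have hmem : t i ∈ Icc a b := htmem i (Nat.lt_succ_iff.mp (Finset.mem_range.mp hi))
    have := Metric.tendsto_nhds.mp (hpt (t i) hmem) (ε / 8) (by positivity)
    simpa [Real.dist_eq] using this
  have EL1 : ∀ᶠ k in atTop, (∫ y in Ioo a b, |f k y - g y|) < L * (ε / 8) :=
    hL1.eventually (eventually_lt_nhds (by positivity))
  filter_upwards [Enet, EL1] with k hknet hkL1 x hx
  -- choose the subinterval containing x
  set i : ℕ := ⌊(x - a) / L⌋₊ with hidef
  have hxa : 0 ≤ (x - a) / L := div_nonneg (by linarith [hx.1]) hL.le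
  have hnL : (n : ℝ) * L = b - a := by rw [hLdef]; field_simp
  have hi_lt : i < n := by
    refine (Nat.floor_lt hxa).mpr ?_
    rw [div_lt_iff₀ hL]
    have := hx.2
    linarith [hnL]
  have hti_le : t i ≤ x := by
    have h1 : (i : ℝ) ≤ (x - a) / L := Nat.floor_le hxa
    have h2 : (i : ℝ) * L ≤ x - a := by
      rw [← le_div_iff₀ hL]; exact h1
    rw [ht_eq i]; linarith
  have hx_le : x ≤ t (i + 1) := by
    have h1 : (x - a) / L < (i : ℝ) + 1 := Nat.lt_floor_add_one _
    have h2 : x - a < ((i : ℝ) + 1) * L := by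
      rw [← div_lt_iff₀ hL]; exact h1
    rw [ht_eq (i+1)]; push_cast; linarith
  have hti : t i ∈ Icc a b := htmem i hi_lt.le
  have hti1 : t (i + 1) ∈ Icc a b := htmem (i + 1) hi_lt
  have hxab : x ∈ Icc a b := Ioo_subset_Icc_self hx
  have htile : t i ≤ t (i + 1) := by linarith [htL i]
  -- variation increments are small
  have hΔVg : (∫ u in t i..t (i + 1), |g' u|) < ε / 8 := by
    refine Hδ0 (t i) (t (i + 1)) hti.1 htile hti1.2 ?_
    rw [htL i]; exact hLδ
  have hΔVk : (∫ u in t i..t (i + 1), |f' k u|) < ε / 8 + ε / 4 := by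
    have e1 : (∫ u in t i..t (i + 1), |f' k u|) =
        (∫ u in a..t (i + 1), |f' k u|) - ∫ u in a..t i, |f' k u| :=
      (intervalIntegral.integral_interval_sub_left (hfii k (t (i + 1)) hti1)
        (hfii k (t i) hti)).symm
    have e2 : (∫ u in t i..t (i + 1), |g' u|) =
        (∫ u in a..t (i + 1), |g' u|) - ∫ u in a..t i, |g' u| :=
      (intervalIntegral.integral_interval_sub_left (hgii (t (i + 1)) hti1)
        (hgii (t i) hti)).symm
    have h1 := hknet i (Finset.mem_range.mpr (Nat.lt_succ_of_lt hi_lt))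
    have h2 := hknet (i + 1) (Finset.mem_range.mpr (Nat.succ_lt_succ hi_lt))
    rw [abs_lt] at h1 h2
    rw [e1]
    rw [e2] at hΔVg
    linarith [h1.1, h1.2, h2.1, h2.2]
  -- pointwise comparison with an averaged point
  have hydiff : ∀ y ∈ Ioo (t i) (t (i + 1)), |f k x - g x| ≤ |f k y - g y| + ε / 2 := by
    intro y hy
    have hyab : y ∈ Icc a b := ⟨hti.1.trans hy.1.le, hy.2.le.trans hti1.2⟩
    have hflocal : f k x - f k y = ∫ u in y..x, f' k u := by
      rw [hfrep k x hxab, hfrep k y hyab, add_sub_add_left_eq_sub,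
        intervalIntegral.integral_interval_sub_left
          (ii_of_mem (f' k) (hfIoc k) (left_mem_Icc.mpr hab.le) hxab)
          (ii_of_mem (f' k) (hfIoc k) (left_mem_Icc.mpr hab.le) hyab)]
    have hglocal : g x - g y = ∫ u in y..x, g' u := by
      rw [hgrep x hxab, hgrep y hyab, add_sub_add_left_eq_sub,
        intervalIntegral.integral_interval_sub_left
          (ii_of_mem g' hgIoc (left_mem_Icc.mpr hab.le) hxab)
          (ii_of_mem g' hgIoc (left_mem_Icc.mpr hab.le) hyab)]
    have hxIcc : x ∈ Icc (t i) (t (i + 1)) := ⟨hti_le, hx_le⟩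
    have hyIcc : y ∈ Icc (t i) (t (i + 1)) := ⟨hy.1.le, hy.2.le⟩
    have hb1 : |∫ u in y..x, f' k u| ≤ ∫ u in t i..t (i + 1), |f' k u| :=
      abs_interval_le (f' k) (hfIoc k) hti hti1 hyIcc hxIcc
    have hb2 : |∫ u in y..x, g' u| ≤ ∫ u in t i..t (i + 1), |g' u| :=
      abs_interval_le g' hgIoc hti hti1 hyIcc hxIcc
    have hsplit : f k x - g x = (f k y - g y) + (∫ u in y..x, f' k u) - ∫ u in y..x, g' u := by
      rw [← hflocal, ← hglocal]; ring
    calc |f k x - g x| =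
        |(f k y - g y) + (∫ u in y..x, f' k u) - ∫ u in y..x, g' u| := by rw [hsplit]
    _ ≤ |f k y - g y| + |∫ u in y..x, f' k u| + |∫ u in y..x, g' u| := by
        have := abs_add_le (f k y - g y) (∫ u in y..x, f' k u)
        have h5 := abs_sub ((f k y - g y) + ∫ u in y..x, f' k u) (∫ u in y..x, g' u)
        calc |(f k y - g y) + (∫ u in y..x, f' k u) - ∫ u in y..x, g' u| ≤
            |(f k y - g y) + ∫ u in y..x, f' k u| + |∫ u in y..x, g' u| := by
              have := abs_sub_abs_le_abs_sub ((f k y - g y) + ∫ u in y..x, f' k u)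
                (∫ u in y..x, g' u)
              exact abs_sub _ _
        _ ≤ |f k y - g y| + |∫ u in y..x, f' k u| + |∫ u in y..x, g' u| := by
              linarith [abs_add_le (f k y - g y) (∫ u in y..x, f' k u)]
    _ ≤ |f k y - g y| + ε / 2 := by linarith
  -- average over the subinterval
  have hJmeas : (volume (Ioo (t i) (t (i + 1)))).toReal = L := by
    rw [Real.volume_Ioo, htL i, ENNReal.toReal_ofReal hL.le]
  have hJint : IntegrableOn (fun y => |f k y - g y|) (Ioo (t i) (t (i + 1))) :=
    (hfgInt k).mono_set ((Ioo_subset_Icc_self).trans (Icc_subset_Icc hti.1 hti1.2))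
  have hconst : IntegrableOn (fun _ : ℝ => |f k x - g x| - ε / 2) (Ioo (t i) (t (i + 1))) := by
    refine (integrableOn_const_iff enorm_ne_top).mpr (Or.inr ?_)
    rw [Real.volume_Ioo]
    exact ENNReal.ofReal_lt_top
  have hint1 : (|f k x - g x| - ε / 2) * L ≤
      ∫ y in Ioo (t i) (t (i + 1)), |f k y - g y| := by
    have := setIntegral_mono_on hconst hJint measurableSet_Ioo
      (fun y hy => by linarith [hydiff y hy])
    rwa [setIntegral_const, measureReal_def, hJmeas, smul_eq_mul, mul_comm] at this
  have hint2 : (∫ y in Ioo (t i) (t (i + 1)), |f k y - g y|) ≤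
      ∫ y in Ioo a b, |f k y - g y| := by
    refine setIntegral_mono_set ((hfgInt k).mono_set Ioo_subset_Icc_self)
      (Eventually.of_forall fun y => abs_nonneg _) ?_
    refine (Ioo_subset_Ioo hti.1 hti1.2).eventuallyLE
  have hfinal : |f k x - g x| < ε := by
    have h6 : (|f k x - g x| - ε / 2) * L < L * (ε / 8) := by
      calc (|f k x - g x| - ε / 2) * L ≤ ∫ y in Ioo (t i) (t (i + 1)), |f k y - g y| := hint1
      _ ≤ ∫ y in Ioo a b, |f k y - g y| := hint2
      _ < L * (ε / 8) := hkL1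
    have h7 : |f k x - g x| - ε / 2 < ε / 8 := by
      by_contra h
      push_neg at h
      nlinarith
    linarith
  rw [Real.dist_eq, abs_sub_comm]
  exact hfinal
end
end

section
/- Let (a,b) ⊂ ℝ be a bounded interval and let f_k, f ∈ W^{1,1}((a,b)). If f_k → f in L¹((a,b)) and ∫_a^b |f_k'(x)| dx → ∫_a^b |f'(x)| dx, then for every open subinterval (c,d) ⊆ (a,b) one has lim_{k→∞} ∫_c^d |f_k'(x)| dx = ∫_c^d |f'(x)| dx. -/
open MeasureTheory Filter Set intervalIntegral
noncomputable section

lemma ii {φ : ℝ → ℝ} {a b c d : ℝ} (h : IntegrableOn φ (Set.Ioo a b))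
    (hac : a ≤ c) (hcd : c ≤ d) (hdb : d ≤ b) : IntervalIntegrable φ volume c d := by
  rw [intervalIntegrable_iff_integrableOn_Ioo_of_le hcd]
  exact h.mono_set (Set.Ioo_subset_Ioo hac hdb)

lemma primCont {φ : ℝ → ℝ} {a b c d : ℝ} (h : IntegrableOn φ (Set.Ioo a b))
    (hac : a ≤ c) (hdb : d ≤ b) :
    ContinuousOn (fun y => ∫ t in c..y, φ t) (Set.Icc c d) := by
  have h1 : IntegrableOn φ (Set.Icc c d) := by
    rw [integrableOn_Icc_iff_integrableOn_Ioo]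
    exact h.mono_set (Set.Ioo_subset_Ioo hac hdb)
  have h2 := intervalIntegral.continuousOn_primitive (μ := volume) (f := φ) (a := c) (b := d) h1
  apply h2.congr
  intro y hy
  exact intervalIntegral.integral_of_le hy.1

-- continuity of x ↦ ∫ t in x..(x+h), φ t on Icc c (e-h)
lemma contShift {φ : ℝ → ℝ} {a b c e h : ℝ} (hφ : IntegrableOn φ (Set.Ioo a b))
    (hac : a ≤ c) (heb : e ≤ b) (hh : 0 ≤ h) (hce : c + h ≤ e) :
    ContinuousOn (fun x => ∫ t in x..(x + h), φ t) (Set.Icc c (e - h)) := by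
  have hP := primCont hφ hac heb (c := c) (d := e)
  have hmap : Set.MapsTo (fun x => x + h) (Set.Icc c (e - h)) (Set.Icc c e) := by
    intro x hx
    simp only [Set.mem_Icc] at hx ⊢
    constructor <;> linarith [hx.1, hx.2]
  have h1 : ContinuousOn (fun x => (∫ t in c..(x + h), φ t) - ∫ t in c..x, φ t)
      (Set.Icc c (e - h)) := by
    refine ContinuousOn.sub (hP.comp ?_ hmap) (hP.mono ?_)
    · exact (continuous_id.add continuous_const).continuousOn
    · exact Set.Icc_subset_Icc_right (by linarith)
  apply h1.congr
  intro x hx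
  exact (intervalIntegral.integral_interval_sub_left
    (ii hφ hac (by linarith [hx.1, hh]) (by linarith [hx.2]))
    (ii hφ hac hx.1 (by linarith [hx.2, hh]))).symm

lemma L2 {φ : ℝ → ℝ} {a b c e h : ℝ} (hφ : IntegrableOn φ (Set.Ioo a b))
    (hac : a ≤ c) (heb : e ≤ b) (hh : 0 < h) (hce : c + h ≤ e) :
    ∫ x in c..(e - h), (∫ t in x..(x + h), |φ t|) ≤ h * ∫ t in c..e, |φ t| := by
  have hφa : IntegrableOn (fun t => |φ t|) (Set.Ioo a b) := hφ.abs
  have hce' : c ≤ e := by linarith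
  have hceh : c ≤ e - h := by linarith
  set F := fun y => ∫ t in c..y, |φ t| with hF
  have hFc : ContinuousOn F (Set.Icc c e) := primCont hφa hac heb
  have hiF : ∀ x y, c ≤ x → x ≤ y → y ≤ e → IntervalIntegrable F volume x y := by
    intro x y h1 h2 h3
    exact ((hFc.mono (Set.Icc_subset_Icc h1 h3)).mono
      (by rw [Set.uIcc_of_le h2])).intervalIntegrable
  have habs : ∀ x ∈ Set.Icc c (e - h), (∫ t in x..(x + h), |φ t|) = F (x + h) - F x := by
    intro x hx
    exact (intervalIntegral.integral_interval_sub_left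
      (ii hφa hac (by linarith [hx.1]) (by linarith [hx.2]))
      (ii hφa hac hx.1 (by linarith [hx.2]))).symm
  have hcongr : ∫ x in c..(e - h), (∫ t in x..(x + h), |φ t|)
      = ∫ x in c..(e - h), (F (x + h) - F x) := by
    apply intervalIntegral.integral_congr
    intro x hx
    rw [Set.uIcc_of_le hceh] at hx
    exact habs x hx
  have hiFs : IntervalIntegrable (fun x => F (x + h)) volume c (e - h) := by
    have : ContinuousOn (fun x => F (x + h)) (Set.Icc c (e - h)) := by
      refine hFc.comp (continuous_id.add continuous_const).continuousOn ?_
      intro x hx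
      simp only [Set.mem_Icc] at hx ⊢
      constructor <;> linarith [hx.1, hx.2]
    exact (this.mono (by rw [Set.uIcc_of_le hceh])).intervalIntegrable
  have hsub : ∫ x in c..(e - h), (F (x + h) - F x)
      = (∫ x in c..(e - h), F (x + h)) - ∫ x in c..(e - h), F x :=
    intervalIntegral.integral_sub hiFs (hiF c (e - h) le_rfl hceh (by linarith))
  have hshift : (∫ x in c..(e - h), F (x + h)) = ∫ x in (c + h)..e, F x := by
    rw [intervalIntegral.integral_comp_add_right]
    norm_num
  have split1 : (∫ x in c..(c + h), F x) + ∫ x in (c + h)..e, F x = ∫ x in c..e, F x :=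
    intervalIntegral.integral_add_adjacent_intervals
      (hiF c (c + h) le_rfl (by linarith) hce) (hiF (c + h) e (by linarith) hce le_rfl)
  have split2 : (∫ x in c..(e - h), F x) + ∫ x in (e - h)..e, F x = ∫ x in c..e, F x :=
    intervalIntegral.integral_add_adjacent_intervals
      (hiF c (e - h) le_rfl hceh (by linarith)) (hiF (e - h) e hceh (by linarith) le_rfl)
  have hFmono : ∀ x ∈ Set.Icc (e - h) e, F x ≤ F e := by
    intro x hx
    have h1 : (∫ t in x..e, |φ t|) = F e - F x :=
      (intervalIntegral.integral_interval_sub_left (ii hφa hac hce' heb)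
        (ii hφa hac (by linarith [hx.1]) (by linarith [hx.2]))).symm
    have h2 : 0 ≤ ∫ t in x..e, |φ t| :=
      intervalIntegral.integral_nonneg hx.2 (fun t _ => abs_nonneg _)
    linarith
  have bound1 : ∫ x in (e - h)..e, F x ≤ h * F e := by
    have := intervalIntegral.integral_mono_on (by linarith : e - h ≤ e)
      (hiF (e - h) e hceh (by linarith) le_rfl) intervalIntegrable_const hFmono
    rwa [intervalIntegral.integral_const, smul_eq_mul, show e - (e - h) = h by ring] at this
  have bound2 : 0 ≤ ∫ x in c..(c + h), F x := by
    apply intervalIntegral.integral_nonneg (by linarith)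
    intro x hx
    exact intervalIntegral.integral_nonneg hx.1 (fun t _ => abs_nonneg _)
  rw [hcongr, hsub, hshift]
  have : F e = ∫ t in c..e, |φ t| := rfl
  linarith

lemma key {φ : ℝ → ℝ} {a b c e h : ℝ} (hφ : IntegrableOn φ (Set.Ioo a b))
    (hac : a ≤ c) (heb : e ≤ b) (hh : 0 < h) (hce : c + h ≤ e) :
    ∫ x in c..(e - h), |∫ t in x..(x + h), φ t| ≤ h * ∫ t in c..e, |φ t| := by
  refine le_trans ?_ (L2 hφ hac heb hh hce)
  have hceh : c ≤ e - h := by linarith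
  apply intervalIntegral.integral_mono_on hceh
  · exact (((contShift hφ hac heb hh.le hce).abs).mono
      (by rw [Set.uIcc_of_le hceh])).intervalIntegrable
  · exact (((contShift hφ.abs hac heb hh.le hce)).mono
      (by rw [Set.uIcc_of_le hceh])).intervalIntegrable
  · intro x hx
    exact intervalIntegral.abs_integral_le_integral_abs (by linarith)
lemma iooEq (φ : ℝ → ℝ) {c e : ℝ} (hce : c ≤ e) :
    ∫ x in Set.Ioo c e, φ x = ∫ x in c..e, φ x := by
  rw [intervalIntegral.integral_of_le hce, integral_Ioc_eq_integral_Ioo]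

lemma mono_Ioo {φ : ℝ → ℝ} {a b c e : ℝ} (hφ : IntegrableOn φ (Set.Ioo a b))
    (h0 : ∀ x, 0 ≤ φ x) (hac : a ≤ c) (heb : e ≤ b) :
    ∫ x in Set.Ioo c e, φ x ≤ ∫ x in Set.Ioo a b, φ x :=
  setIntegral_mono_set hφ (Filter.Eventually.of_forall h0)
    ((Set.Ioo_subset_Ioo hac heb).eventuallyLE)

lemma repdiff {u u' : ℝ → ℝ} {a b : ℝ} (hint : IntegrableOn u' (Set.Ioo a b))
    (hrep : ∀ x ∈ Set.Icc a b, u x = u a + ∫ t in a..x, u' t)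
    {x y : ℝ} (hx : x ∈ Set.Icc a b) (hy : y ∈ Set.Icc a b) :
    u y - u x = ∫ t in x..y, u' t := by
  rw [hrep x hx, hrep y hy]
  have := intervalIntegral.integral_interval_sub_left
    (ii hint le_rfl hy.1 hy.2) (ii hint le_rfl hx.1 hx.2)
  linarith [this]

lemma repCont {u u' : ℝ → ℝ} {a b : ℝ} (hint : IntegrableOn u' (Set.Ioo a b))
    (hrep : ∀ x ∈ Set.Icc a b, u x = u a + ∫ t in a..x, u' t) :
    ContinuousOn u (Set.Icc a b) := by
  have h1 : ContinuousOn (fun y => u a + ∫ t in a..y, u' t) (Set.Icc a b) :=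
    (continuousOn_const.add (primCont hint le_rfl le_rfl))
  exact h1.congr hrep

lemma contOn_integrableOn_Ioo {u : ℝ → ℝ} {a b : ℝ} (h : ContinuousOn u (Set.Icc a b)) :
    IntegrableOn u (Set.Ioo a b) :=
  (h.integrableOn_Icc).mono_set Set.Ioo_subset_Icc_self

lemma lsc (a b : ℝ) (f : ℕ → ℝ → ℝ) (f' : ℕ → ℝ → ℝ) (g : ℝ → ℝ) (g' : ℝ → ℝ)
    (hfint : ∀ k, IntegrableOn (f' k) (Set.Ioo a b))
    (hfrep : ∀ k, ∀ x ∈ Set.Icc a b, f k x = f k a + ∫ t in a..x, f' k t)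
    (hgint : IntegrableOn g' (Set.Ioo a b))
    (hgrep : ∀ x ∈ Set.Icc a b, g x = g a + ∫ t in a..x, g' t)
    (hL1 : Tendsto (fun k => ∫ x in Set.Ioo a b, |f k x - g x|) atTop (nhds 0))
    (c e : ℝ) (hac : a ≤ c) (hce : c ≤ e) (heb : e ≤ b) {ε : ℝ} (hε : 0 < ε) :
    ∀ᶠ k in atTop, (∫ x in Set.Ioo c e, |g' x|) - ε ≤ ∫ x in Set.Ioo c e, |f' k x| := by
  rcases eq_or_lt_of_le hce with rfl | hce'
  · apply Eventually.of_forall; intro k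
    simp only [Set.Ioo_self, Measure.restrict_empty, integral_zero_measure]
    linarith
  clear hce
  set M := e - c with hM
  have hMpos : 0 < M := by rw [hM]; linarith
  clear_value M
  have hab : a ≤ b := le_trans hac (le_trans hce'.le heb)
  set δ := ε / (4 * (3 + M)) with hδ
  have hδpos : 0 < δ := by positivity
  have hδsum : δ * (M + 2) ≤ ε / 4 := by
    rw [hδ, div_mul_eq_mul_div, div_le_div_iff₀ (by positivity) (by norm_num)]
    nlinarith
  clear_value δ
  clear hδ
  -- continuous approximation of g'
  have hGext : Integrable (Set.indicator (Set.Ioo a b) g') volume :=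
    hgint.integrable_indicator measurableSet_Ioo
  obtain ⟨ψ, hψsupp, hψnear, hψcont, hψint⟩ :=
    hGext.exists_hasCompactSupport_integral_sub_le hδpos
  have hψIoo : IntegrableOn ψ (Set.Ioo a b) := hψint.integrableOn
  have hψδint : IntegrableOn (fun x => g' x - ψ x) (Set.Ioo a b) := hgint.sub hψIoo
  have hδ1 : ∫ x in Set.Ioo a b, |g' x - ψ x| ≤ δ := by
    have e1 : ∫ x in Set.Ioo a b, |g' x - ψ x|
        = ∫ x in Set.Ioo a b, ‖Set.indicator (Set.Ioo a b) g' x - ψ x‖ := by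
      apply setIntegral_congr_fun measurableSet_Ioo
      intro x hx
      simp only [Set.indicator_of_mem hx, Real.norm_eq_abs]
    have e2 : ∫ x in Set.Ioo a b, ‖Set.indicator (Set.Ioo a b) g' x - ψ x‖
        ≤ ∫ x, ‖Set.indicator (Set.Ioo a b) g' x - ψ x‖ :=
      setIntegral_le_integral (hGext.sub hψint).norm
        (Filter.Eventually.of_forall fun x => norm_nonneg _)
    linarith
  -- bound for ψ on [c,e]
  obtain ⟨C, hC⟩ := (isCompact_Icc (a := c) (b := e)).exists_bound_of_continuousOn
    hψcont.continuousOn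
  have hC0 : 0 ≤ C := le_trans (norm_nonneg _) (hC c ⟨le_rfl, hce'.le⟩)
  -- uniform continuity
  have hψu : UniformContinuous ψ := hψsupp.uniformContinuous_of_continuous hψcont
  obtain ⟨h₀, h₀pos, hmod⟩ := Metric.uniformContinuous_iff.1 hψu δ hδpos
  -- choice of h
  set h : ℝ := min (min (h₀ / 2) (M / 2)) (ε / (4 * (C + 1))) with hhdef
  have hhpos : 0 < h := by
    apply lt_min (lt_min (by linarith) (by linarith))
    positivity
  have hhM : c + h ≤ e := by
    have h1 : h ≤ M / 2 := le_trans (min_le_left _ _) (min_le_right _ _)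
    have := hM
    linarith
  have hceh : c ≤ e - h := by linarith
  have hhh₀ : h < h₀ := by
    have h1 : h ≤ h₀ / 2 := le_trans (min_le_left _ _) (min_le_left _ _)
    linarith
  have hhC : h * C ≤ ε / 4 := by
    have h1 : h ≤ ε / (4 * (C + 1)) := min_le_right _ _
    have h2 : h * C ≤ (ε / (4 * (C + 1))) * C := mul_le_mul_of_nonneg_right h1 hC0
    have h3 : (ε / (4 * (C + 1))) * C ≤ ε / 4 := by
      rw [div_mul_eq_mul_div, div_le_div_iff₀ (by positivity) (by norm_num)]
      nlinarith
    linarith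
  clear_value h
  clear hhdef
  -- eventual smallness of L1 distance
  have hLk : ∀ᶠ k in atTop, (∫ x in Set.Ioo a b, |f k x - g x|) < h * ε / 8 :=
    hL1.eventually_lt_const (by positivity)
  filter_upwards [hLk] with k hk
  set Lk := ∫ x in Set.Ioo a b, |f k x - g x| with hLkdef
  clear_value Lk
  -- continuity of f k and g
  have hfkcont : ContinuousOn (f k) (Set.Icc a b) := repCont (hfint k) (hfrep k)
  have hgcont : ContinuousOn g (Set.Icc a b) := repCont hgint hgrep
  have hfg_int : IntegrableOn (fun x => |f k x - g x|) (Set.Ioo a b) :=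
    contOn_integrableOn_Ioo ((hfkcont.sub hgcont).abs)
  -- convert goal to interval integrals
  rw [iooEq _ hce'.le, iooEq _ hce'.le]
  set Bk := ∫ x in c..e, |f' k x| with hBkdef
  clear_value Bk
  -- Step A
  have hA : ∫ x in c..(e - h), |∫ t in x..(x + h), f' k t| ≤ h * Bk := by
    rw [hBkdef]; exact key (hfint k) hac heb hhpos hhM
  -- membership helpers
  have hmem : ∀ x ∈ Set.Icc c (e - h), x ∈ Set.Icc a b := by
    intro x hx; exact ⟨le_trans hac hx.1, by linarith [hx.2]⟩
  have hmem' : ∀ x ∈ Set.Icc c (e - h), x + h ∈ Set.Icc a b := by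
    intro x hx; exact ⟨by linarith [hx.1, hhpos.le, hac], by linarith [hx.2]⟩
  have hmapsTo : Set.MapsTo (fun x => x + h) (Set.Icc c (e - h)) (Set.Icc a b) := hmem'
  -- rewrite integrand of hA
  have hEq1 : ∫ x in c..(e - h), |∫ t in x..(x + h), f' k t|
      = ∫ x in c..(e - h), |f k (x + h) - f k x| := by
    apply intervalIntegral.integral_congr
    intro x hx
    rw [Set.uIcc_of_le hceh] at hx
    show |∫ t in x..(x + h), f' k t| = |f k (x + h) - f k x|
    rw [← repdiff (hfint k) (hfrep k) (hmem x hx) (hmem' x hx)]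
  rw [hEq1] at hA
  -- pointwise lower bound on Icc c (e-h)
  have hpt : ∀ x ∈ Set.Icc c (e - h),
      (|∫ t in x..(x + h), ψ t| - (∫ t in x..(x + h), |g' t - ψ t|))
        - (|f k (x + h) - g (x + h)| + |f k x - g x|)
      ≤ |f k (x + h) - f k x| := by
    intro x hx
    have hgd : g (x + h) - g x = ∫ t in x..(x + h), g' t :=
      repdiff hgint hgrep (hmem x hx) (hmem' x hx)
    have hsplit : (∫ t in x..(x + h), g' t)
        = (∫ t in x..(x + h), ψ t) + ∫ t in x..(x + h), (g' t - ψ t) := by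
      rw [← intervalIntegral.integral_add
        (ii hψIoo (hmem x hx).1 (by linarith [hhpos.le]) (hmem' x hx).2)
        (ii hψδint (hmem x hx).1 (by linarith [hhpos.le]) (hmem' x hx).2)]
      apply intervalIntegral.integral_congr
      intro t _; ring
    have habs1 : |∫ t in x..(x + h), (g' t - ψ t)| ≤ ∫ t in x..(x + h), |g' t - ψ t| :=
      intervalIntegral.abs_integral_le_integral_abs (by linarith [hhpos.le])
    -- |g(x+h)-g x| ≥ |∫ψ| - ∫|g'-ψ|
    have h5 : |∫ t in x..(x + h), ψ t|
        ≤ |g (x + h) - g x| + |∫ t in x..(x + h), (g' t - ψ t)| := by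
      have h6 : |∫ t in x..(x + h), ψ t|
          ≤ |(∫ t in x..(x + h), ψ t) + (∫ t in x..(x + h), (g' t - ψ t))|
            + |∫ t in x..(x + h), (g' t - ψ t)| := by
        have := abs_add_le ((∫ t in x..(x + h), ψ t) + (∫ t in x..(x + h), (g' t - ψ t)))
          (-(∫ t in x..(x + h), (g' t - ψ t)))
        simpa using this
      rw [hgd, hsplit]
      linarith
    -- triangle with f k
    have htri : |g (x + h) - g x|
        ≤ |f k (x + h) - f k x| + (|f k (x + h) - g (x + h)| + |f k x - g x|) := by
      have t1 : g (x + h) - g x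
          = (f k (x + h) - f k x) + ((g (x + h) - f k (x + h)) + (f k x - g x)) := by ring
      calc |g (x + h) - g x|
          ≤ |f k (x + h) - f k x| + |(g (x + h) - f k (x + h)) + (f k x - g x)| := by
            rw [t1]; exact abs_add_le _ _
        _ ≤ |f k (x + h) - f k x| + (|g (x + h) - f k (x + h)| + |f k x - g x|) := by
            have := abs_add_le (g (x + h) - f k (x + h)) (f k x - g x)
            linarith
        _ = |f k (x + h) - f k x| + (|f k (x + h) - g (x + h)| + |f k x - g x|) := by
            rw [abs_sub_comm (g (x + h)) (f k (x + h))]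
    linarith
  -- integrability of the various integrands over c..(e-h)
  have huIcc : Set.uIcc c (e - h) = Set.Icc c (e - h) := Set.uIcc_of_le hceh
  have iLHS : IntervalIntegrable (fun x => |f k (x + h) - f k x|) volume c (e - h) := by
    have : ContinuousOn (fun x => |f k (x + h) - f k x|) (Set.Icc c (e - h)) :=
      (((hfkcont.comp (continuous_id.add continuous_const).continuousOn hmapsTo).sub
        (hfkcont.mono fun x hx => hmem x hx)).abs)
    exact (this.mono (by rw [huIcc])).intervalIntegrable
  have iψ : IntervalIntegrable (fun x => |∫ t in x..(x + h), ψ t|) volume c (e - h) :=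
    (((contShift hψIoo hac heb hhpos.le hhM).abs).mono (by rw [huIcc])).intervalIntegrable
  have iGψ : IntervalIntegrable (fun x => ∫ t in x..(x + h), |g' t - ψ t|) volume c (e - h) :=
    ((contShift hψδint.abs hac heb hhpos.le hhM).mono (by rw [huIcc])).intervalIntegrable
  have idk1 : IntervalIntegrable (fun x => |f k (x + h) - g (x + h)|) volume c (e - h) := by
    have : ContinuousOn (fun x => |f k (x + h) - g (x + h)|) (Set.Icc c (e - h)) :=
      ((hfkcont.comp (continuous_id.add continuous_const).continuousOn hmapsTo).sub
        (hgcont.comp (continuous_id.add continuous_const).continuousOn hmapsTo)).abs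
    exact (this.mono (by rw [huIcc])).intervalIntegrable
  have idk2 : IntervalIntegrable (fun x => |f k x - g x|) volume c (e - h) := by
    have : ContinuousOn (fun x => |f k x - g x|) (Set.Icc c (e - h)) :=
      ((hfkcont.mono fun x hx => hmem x hx).sub (hgcont.mono fun x hx => hmem x hx)).abs
    exact (this.mono (by rw [huIcc])).intervalIntegrable
  -- integrate the pointwise bound
  have m1 : ∫ x in c..(e - h),
      ((|∫ t in x..(x + h), ψ t| - (∫ t in x..(x + h), |g' t - ψ t|))
        - (|f k (x + h) - g (x + h)| + |f k x - g x|))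
      ≤ ∫ x in c..(e - h), |f k (x + h) - f k x| :=
    intervalIntegral.integral_mono_on hceh ((iψ.sub iGψ).sub (idk1.add idk2)) iLHS hpt
  rw [intervalIntegral.integral_sub (iψ.sub iGψ) (idk1.add idk2),
    intervalIntegral.integral_sub iψ iGψ,
    intervalIntegral.integral_add idk1 idk2] at m1
  -- bound b1
  have hgd_ce : ∫ t in c..e, |g' t - ψ t| ≤ δ := by
    rw [← iooEq _ hce'.le]
    exact le_trans (mono_Ioo hψδint.abs (fun x => abs_nonneg _) hac heb) hδ1
  have b1 : ∫ x in c..(e - h), (∫ t in x..(x + h), |g' t - ψ t|) ≤ h * δ :=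
    le_trans (L2 hψδint hac heb hhpos hhM) (mul_le_mul_of_nonneg_left hgd_ce hhpos.le)
  -- bounds b2, b3
  have b2 : ∫ x in c..(e - h), |f k (x + h) - g (x + h)| ≤ Lk := by
    have e1 : ∫ x in c..(e - h), |f k (x + h) - g (x + h)|
        = ∫ x in (c + h)..(e - h + h), |f k x - g x| :=
      intervalIntegral.integral_comp_add_right (fun x => |f k x - g x|) h
    rw [e1, show e - h + h = e by ring,
      ← iooEq (fun x => |f k x - g x|) (show c + h ≤ e by linarith), hLkdef]
    exact mono_Ioo hfg_int (fun x => abs_nonneg _) (show a ≤ c + h by linarith) heb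
  have b3 : ∫ x in c..(e - h), |f k x - g x| ≤ Lk := by
    rw [← iooEq (fun x => |f k x - g x|) hceh, hLkdef]
    exact mono_Ioo hfg_int (fun x => abs_nonneg _) hac (show e - h ≤ b by linarith)
  -- bound b4 : lower bound for ∫ |∫ψ|
  have q1 : ∀ x ∈ Set.Icc c (e - h),
      h * |ψ x| - h * δ ≤ |∫ t in x..(x + h), ψ t| := by
    intro x hx
    have e1 : ∫ t in x..(x + h), (ψ t - ψ x) = (∫ t in x..(x + h), ψ t) - h * ψ x := by
      rw [intervalIntegral.integral_sub (hψcont.intervalIntegrable (μ := volume) x (x + h))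
        intervalIntegrable_const, intervalIntegral.integral_const]
      simp only [smul_eq_mul]
      ring_nf
    have e2 : |∫ t in x..(x + h), (ψ t - ψ x)| ≤ h * δ := by
      refine le_trans (intervalIntegral.abs_integral_le_integral_abs
        (by linarith [hhpos.le])) ?_
      have e3 : ∫ t in x..(x + h), |ψ t - ψ x| ≤ ∫ t in x..(x + h), δ := by
        apply intervalIntegral.integral_mono_on (by linarith [hhpos.le])
          ((hψcont.sub continuous_const).abs.intervalIntegrable (μ := volume) x (x + h))
          intervalIntegrable_const
        intro t ht
        have hd : dist t x < h₀ := by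
          rw [Real.dist_eq]
          rw [abs_of_nonneg (by linarith [ht.1])]
          linarith [ht.2]
        have := hmod hd
        rw [Real.dist_eq] at this
        exact this.le
      rw [intervalIntegral.integral_const, smul_eq_mul] at e3
      calc ∫ t in x..(x + h), |ψ t - ψ x| ≤ (x + h - x) * δ := e3
        _ = h * δ := by ring
    have e4 : |h * ψ x| ≤ |∫ t in x..(x + h), ψ t|
        + |(∫ t in x..(x + h), ψ t) - h * ψ x| := by
      have := abs_add_le ((∫ t in x..(x + h), ψ t))
        (h * ψ x - (∫ t in x..(x + h), ψ t))
      simp only [add_sub_cancel] at this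
      calc |h * ψ x| ≤ |∫ t in x..(x + h), ψ t|
            + |h * ψ x - (∫ t in x..(x + h), ψ t)| := this
        _ = _ := by rw [abs_sub_comm]
    rw [← e1] at e4
    rw [abs_mul, abs_of_nonneg hhpos.le] at e4
    linarith
  have icontψabs : IntervalIntegrable (fun x => h * |ψ x| - h * δ) volume c (e - h) :=
    ((continuous_const.mul hψcont.abs).sub continuous_const).intervalIntegrable (μ := volume) _ _
  have m2 : ∫ x in c..(e - h), (h * |ψ x| - h * δ)
      ≤ ∫ x in c..(e - h), |∫ t in x..(x + h), ψ t| :=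
    intervalIntegral.integral_mono_on hceh icontψabs iψ q1
  have m2' : ∫ x in c..(e - h), (h * |ψ x| - h * δ)
      = h * (∫ x in c..(e - h), |ψ x|) - (e - h - c) * (h * δ) := by
    rw [intervalIntegral.integral_sub (f := fun x => h * |ψ x|) (g := fun _ => h * δ)
      ((continuous_const.mul hψcont.abs).intervalIntegrable (μ := volume) _ _) intervalIntegrable_const,
      intervalIntegral.integral_const_mul, intervalIntegral.integral_const, smul_eq_mul]
  have q2 : (∫ x in c..e, |ψ x|) - h * C ≤ ∫ x in c..(e - h), |ψ x| := by
    have hsplit2 : (∫ x in c..(e - h), |ψ x|) + ∫ x in (e - h)..e, |ψ x|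
        = ∫ x in c..e, |ψ x| :=
      intervalIntegral.integral_add_adjacent_intervals
        (hψcont.abs.intervalIntegrable (μ := volume) _ _) (hψcont.abs.intervalIntegrable (μ := volume) _ _)
    have hb : ∫ x in (e - h)..e, |ψ x| ≤ h * C := by
      have := intervalIntegral.integral_mono_on (by linarith : e - h ≤ e)
        (hψcont.abs.intervalIntegrable (μ := volume) _ _) intervalIntegrable_const
        (fun x hx => by
          have := hC x ⟨by linarith [hx.1], hx.2⟩
          rwa [Real.norm_eq_abs] at this)
      rwa [intervalIntegral.integral_const, smul_eq_mul,
        show e - (e - h) = h by ring] at this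
    linarith
  have q3 : (∫ x in c..e, |g' x|) - δ ≤ ∫ x in c..e, |ψ x| := by
    have hptq : ∀ x ∈ Set.Icc c e, |g' x| - |g' x - ψ x| ≤ |ψ x| := by
      intro x _
      have := abs_add_le (ψ x) (g' x - ψ x)
      simp only [add_sub_cancel] at this
      linarith
    have := intervalIntegral.integral_mono_on hce'.le
      (((ii hgint hac hce'.le heb).abs).sub ((ii hψδint hac hce'.le heb).abs))
      (hψcont.abs.intervalIntegrable (μ := volume) _ _) hptq
    rw [intervalIntegral.integral_sub ((ii hgint hac hce'.le heb).abs)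
      ((ii hψδint hac hce'.le heb).abs)] at this
    linarith
  -- final assembly
  have hcM : e - h - c ≤ M := by have := hM; linarith
  have hfin : h * ((∫ x in c..e, |g' x|) - ε) ≤ h * Bk := by
    have p1 : h * ((∫ x in c..e, |g' x|) - δ - h * C) ≤ h * (∫ x in c..(e - h), |ψ x|) := by
      apply mul_le_mul_of_nonneg_left _ hhpos.le
      linarith
    have p2 : (e - h - c) * (h * δ) ≤ M * (h * δ) :=
      mul_le_mul_of_nonneg_right hcM (by positivity)
    have p3 : h * (δ * (M + 2)) ≤ h * (ε / 4) :=
      mul_le_mul_of_nonneg_left hδsum hhpos.le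
    have p4 : h * (h * C) ≤ h * (ε / 4) := mul_le_mul_of_nonneg_left hhC hhpos.le
    linarith [hA, m1, b1, b2, b3, m2, m2', p1, p2, p3, p4, hk, mul_pos hhpos hε]
  exact le_of_mul_le_mul_left hfin hhpos

theorem stmt6 (a b : ℝ) (hab : a < b) (f : ℕ → ℝ → ℝ) (f' : ℕ → ℝ → ℝ)
    (g : ℝ → ℝ) (g' : ℝ → ℝ)
    (hfint : ∀ k, IntegrableOn (f' k) (Set.Ioo a b))
    (hfrep : ∀ k, ∀ x ∈ Set.Icc a b, f k x = f k a + ∫ t in a..x, f' k t)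
    (hgint : IntegrableOn g' (Set.Ioo a b))
    (hgrep : ∀ x ∈ Set.Icc a b, g x = g a + ∫ t in a..x, g' t)
    (hL1 : Tendsto (fun k => ∫ x in Set.Ioo a b, |f k x - g x|) atTop (nhds 0))
    (hTV : Tendsto (fun k => ∫ x in Set.Ioo a b, |f' k x|) atTop
      (nhds (∫ x in Set.Ioo a b, |g' x|))) :
    ∀ c e : ℝ, a ≤ c → c < e → e ≤ b →
      Tendsto (fun k => ∫ x in Set.Ioo c e, |f' k x|) atTop
        (nhds (∫ x in Set.Ioo c e, |g' x|)) := by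
  intro c e hc hce heb
  have heb' : e ≤ b := heb
  have hcb : c ≤ b := le_trans hce.le heb
  have hae : a ≤ e := le_trans hc hce.le
  have hab' : a ≤ b := hab.le
  -- additivity of the total variation integral
  have hadd : ∀ (φ : ℝ → ℝ), IntegrableOn φ (Set.Ioo a b) →
      (∫ x in Set.Ioo a b, |φ x|) = (∫ x in Set.Ioo a c, |φ x|)
        + (∫ x in Set.Ioo c e, |φ x|) + ∫ x in Set.Ioo e b, |φ x| := by
    intro φ hφ
    rw [iooEq (fun x => |φ x|) hab', iooEq (fun x => |φ x|) hc,
      iooEq (fun x => |φ x|) hce.le, iooEq (fun x => |φ x|) heb]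
    have i1 : IntervalIntegrable (fun x => |φ x|) volume a c := (ii hφ le_rfl hc hcb).abs
    have i2 : IntervalIntegrable (fun x => |φ x|) volume c e := (ii hφ hc hce.le heb).abs
    have i3 : IntervalIntegrable (fun x => |φ x|) volume e b := (ii hφ hae heb le_rfl).abs
    have i4 : IntervalIntegrable (fun x => |φ x|) volume c b := (ii hφ hc hcb le_rfl).abs
    have h1 : (∫ x in a..c, |φ x|) + ∫ x in c..b, |φ x| = ∫ x in a..b, |φ x| :=
      intervalIntegral.integral_add_adjacent_intervals i1 i4
    have h2 : (∫ x in c..e, |φ x|) + ∫ x in e..b, |φ x| = ∫ x in c..b, |φ x| :=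
      intervalIntegral.integral_add_adjacent_intervals i2 i3
    linarith
  rw [Metric.tendsto_nhds]
  intro ε hε
  have hε4 : 0 < ε / 4 := by linarith
  have E1 := lsc a b f f' g g' hfint hfrep hgint hgrep hL1 a c le_rfl hc hcb hε4
  have E2 := lsc a b f f' g g' hfint hfrep hgint hgrep hL1 c e hc hce.le heb hε4
  have E3 := lsc a b f f' g g' hfint hfrep hgint hgrep hL1 e b hae heb le_rfl hε4
  have E4 := (Metric.tendsto_nhds.mp hTV) (ε / 4) hε4
  filter_upwards [E1, E2, E3, E4] with k e1 e2 e3 e4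
  rw [Real.dist_eq] at e4 ⊢
  have e4' := abs_lt.mp e4
  have hTk := hadd (f' k) (hfint k)
  have hT := hadd g' hgint
  have hnnA : (0:ℝ) ≤ ∫ x in Set.Ioo a c, |f' k x| :=
    setIntegral_nonneg measurableSet_Ioo fun x _ => abs_nonneg _
  have hnnC : (0:ℝ) ≤ ∫ x in Set.Ioo e b, |f' k x| :=
    setIntegral_nonneg measurableSet_Ioo fun x _ => abs_nonneg _
  rw [abs_sub_lt_iff]
  constructor
  · linarith
  · linarith
end
end

section
/- Let φ : S¹ → S¹ be Lipschitz, f(θ) := φ(cos θ, sin θ) = (f₁(θ), f₂(θ)), and let Φ : [0,2π] → ℝ be a continuous lifting of φ, i.e. f(θ) = (cos Φ(θ), sin Φ(θ)) on [0,2π]. Then Φ(2π) − Φ(0) = ∫_0^{2π} (f₁(θ) f₂'(θ) − f₂(θ) f₁'(θ)) dθ, where f₁', f₂' are the a.e.-defined derivatives of the Lipschitz functions f₁, f₂. In particular the degree deg(φ) := (Φ(2π) − Φ(0))/(2π) equals (1/2π) ∫_0^{2π} (f₁ f₂' − f₂ f₁') dθ. -/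
open MeasureTheory Filter Set Real

open Topology intervalIntegral

noncomputable section

abbrev E2 : Type := EuclideanSpace ℝ (Fin 2)

def circ (θ : ℝ) : E2 := !₂[Real.cos θ, Real.sin θ]


lemma lipschitz_ftc {g : ℝ → ℝ} {L : NNReal} (hg : LipschitzWith L g) {a b : ℝ} (hab : a ≤ b) :
    ∫ t in a..b, deriv g t = g b - g a := by
  set h : ℕ → ℝ := fun n => 1 / (n + 1) with hh
  have hpos : ∀ n, 0 < h n := fun n => by positivity
  have htend : Tendsto h atTop (𝓝 0) := tendsto_one_div_add_atTop_nhds_zero_nat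
  have gcont : Continuous g := hg.continuous
  have gint : ∀ c d : ℝ, IntervalIntegrable g volume c d := fun c d =>
    gcont.intervalIntegrable c d
  set F : ℕ → ℝ → ℝ := fun n x => (g (x + h n) - g x) / h n with hF
  -- limit of integrals of F equals g b - g a
  have slopelim : ∀ c : ℝ, Tendsto (fun n => (∫ x in c..(c + h n), g x) / h n) atTop (𝓝 (g c)) := by
    intro c
    have hder : HasDerivAt (fun y => ∫ x in c..y, g x) (g c) c :=
      intervalIntegral.integral_hasDerivAt_right (gint c c)
        (gcont.stronglyMeasurableAtFilter _ _) gcont.continuousAt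
    have hslope := hasDerivAt_iff_tendsto_slope.mp hder
    have hseq : Tendsto (fun n => c + h n) atTop (𝓝[≠] c) := by
      refine tendsto_nhdsWithin_iff.mpr ⟨by simpa using tendsto_const_nhds.add htend, ?_⟩
      exact Eventually.of_forall fun n => by
        simp only [mem_compl_iff, mem_singleton_iff]
        nlinarith [hpos n]
    have := hslope.comp hseq
    refine this.congr fun n => ?_
    simp only [Function.comp_apply, slope_def_field, intervalIntegral.integral_same, sub_zero,
      add_sub_cancel_left]
  have key1 : Tendsto (fun n => ∫ x in a..b, F n x) atTop (𝓝 (g b - g a)) := by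
    have heq : ∀ n, (∫ x in a..b, F n x)
        = (∫ x in b..(b + h n), g x) / h n - (∫ x in a..(a + h n), g x) / h n := by
      intro n
      have h1 : (∫ x in a..b, F n x) = (∫ x in a..b, (g (x + h n) - g x)) / h n := by
        rw [← intervalIntegral.integral_div]
      have h2 : (∫ x in a..b, (g (x + h n) - g x))
          = (∫ x in (a + h n)..(b + h n), g x) - ∫ x in a..b, g x := by
        have h2a : (∫ x in a..b, g (x + h n)) = ∫ x in (a + h n)..(b + h n), g x :=
          intervalIntegral.integral_comp_add_right g (h n)
        rw [intervalIntegral.integral_sub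
          ((by fun_prop : Continuous fun x : ℝ => g (x + h n)).intervalIntegrable a b)
          (gint a b), h2a]
      have h3 : (∫ x in a..(a + h n), g x) + (∫ x in (a + h n)..(b + h n), g x)
          = ∫ x in a..(b + h n), g x := intervalIntegral.integral_add_adjacent_intervals (gint _ _) (gint _ _)
      have h4 : (∫ x in a..b, g x) + (∫ x in b..(b + h n), g x)
          = ∫ x in a..(b + h n), g x := intervalIntegral.integral_add_adjacent_intervals (gint _ _) (gint _ _)
      rw [h1, h2, ← sub_div]
      congr 1
      linarith [h3, h4]
    refine Tendsto.congr (fun n => (heq n).symm) ((slopelim b).sub (slopelim a))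
  -- dominated convergence
  have key2 : Tendsto (fun n => ∫ x in a..b, F n x) atTop (𝓝 (∫ t in a..b, deriv g t)) := by
    simp only [intervalIntegral.integral_of_le hab]
    apply MeasureTheory.tendsto_integral_of_dominated_convergence (fun _ => (L : ℝ))
    · intro n
      exact ((gcont.comp (continuous_add_right (h n))).sub gcont).div_const _
        |>.aestronglyMeasurable
    · exact integrable_const _
    · intro n
      refine Eventually.of_forall fun x => ?_
      have := hg.dist_le_mul (x + h n) x
      rw [Real.dist_eq, Real.dist_eq] at this
      simp only [add_sub_cancel_left, abs_of_pos (hpos n)] at this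
      rw [Real.norm_eq_abs, hF, abs_div, abs_of_pos (hpos n), div_le_iff₀ (hpos n)]
      simpa using this
    · apply ae_restrict_of_ae
      filter_upwards [hg.ae_differentiableAt_real] with x hx
      have hslope := hasDerivAt_iff_tendsto_slope.mp hx.hasDerivAt
      have hseq : Tendsto (fun n => x + h n) atTop (𝓝[≠] x) := by
        refine tendsto_nhdsWithin_iff.mpr ⟨by simpa using tendsto_const_nhds.add htend, ?_⟩
        exact Eventually.of_forall fun n => by
          simp only [mem_compl_iff, mem_singleton_iff]
          nlinarith [hpos n]
      refine (hslope.comp hseq).congr fun n => ?_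
      simp only [Function.comp_apply, slope_def_field, add_sub_cancel_left, hF]
  exact tendsto_nhds_unique key2 key1


lemma circ_apply0 (t : ℝ) : circ t 0 = Real.cos t := rfl
lemma circ_apply1 (t : ℝ) : circ t 1 = Real.sin t := rfl

lemma circ_norm (t : ℝ) : ‖circ t‖ = 1 := by
  rw [EuclideanSpace.norm_eq]
  simp [Fin.sum_univ_two, circ_apply0, circ_apply1, Real.sin_sq_add_cos_sq]

lemma circ_sub_norm (a b : ℝ) : ‖circ a - circ b‖ = 2 * |Real.sin ((a - b) / 2)| := by
  rw [show ‖circ a - circ b‖ = Real.sqrt (‖(circ a - circ b) 0‖ ^ 2 + ‖(circ a - circ b) 1‖ ^ 2) by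
    rw [EuclideanSpace.norm_eq]; simp [Fin.sum_univ_two]]
  have h0 : (circ a - circ b) 0 = Real.cos a - Real.cos b := rfl
  have h1 : (circ a - circ b) 1 = Real.sin a - Real.sin b := rfl
  rw [h0, h1, Real.norm_eq_abs, Real.norm_eq_abs, sq_abs, sq_abs]
  rw [show (Real.cos a - Real.cos b) ^ 2 + (Real.sin a - Real.sin b) ^ 2
      = (2 * |Real.sin ((a - b) / 2)|) ^ 2 by
    rw [mul_pow, sq_abs]
    have hs : Real.sin ((a - b) / 2) ^ 2 = (1 - Real.cos (a - b)) / 2 := by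
      rw [show Real.sin ((a-b)/2) ^ 2 = |Real.sin ((a-b)/2)| ^ 2 from (sq_abs _).symm,
        Real.abs_sin_half, Real.sq_sqrt]
      nlinarith [Real.cos_le_one (a - b)]
    rw [Real.cos_sub] at hs
    nlinarith [Real.sin_sq_add_cos_sq a, Real.sin_sq_add_cos_sq b]]
  exact Real.sqrt_sq (by positivity)

lemma circ_lipschitz : LipschitzWith 1 circ := by
  apply LipschitzWith.of_dist_le_mul
  intro x y
  rw [dist_eq_norm, circ_sub_norm, Real.dist_eq, NNReal.coe_one, one_mul]
  calc 2 * |Real.sin ((x - y) / 2)| ≤ 2 * |(x - y) / 2| := by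
        have := Real.abs_sin_le_abs (x := (x - y) / 2); linarith
    _ = |x - y| := by rw [abs_div, abs_two]; ring

lemma dist_le_circ {a b : ℝ} (h : |a - b| ≤ π) : |a - b| ≤ π / 2 * ‖circ a - circ b‖ := by
  rw [circ_sub_norm]
  have hπ : 0 < π := Real.pi_pos
  have hj := Real.mul_abs_le_abs_sin (x := (a - b) / 2)
    (by rw [abs_div, abs_two]; linarith [abs_nonneg (a-b)])
  rw [abs_div, abs_two] at hj
  have h2 : 2 / π * (|a - b| / 2) ≤ |Real.sin ((a - b) / 2)| := hj
  calc |a - b| = π / 2 * (2 * (2 / π * (|a - b| / 2))) := by field_simp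
    _ ≤ π / 2 * (2 * |Real.sin ((a - b) / 2)|) := by
        apply mul_le_mul_of_nonneg_left (by linarith) (by positivity)

theorem stmt15 (φ : E2 → E2) (K : NNReal)
    (hlip : LipschitzOnWith K φ (Metric.sphere (0 : E2) 1))
    (hsph : ∀ x : E2, ‖x‖ = 1 → ‖φ x‖ = 1)
    (Φ : ℝ → ℝ) (hΦc : ContinuousOn Φ (Set.Icc 0 (2 * π)))
    (hΦ : ∀ θ ∈ Set.Icc 0 (2 * π), φ (circ θ) = circ (Φ θ)) :
    Φ (2 * π) - Φ 0
      = ∫ θ in (0 : ℝ)..(2 * π),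
          (φ (circ θ) 0 * deriv (fun t => φ (circ t) 1) θ
            - φ (circ θ) 1 * deriv (fun t => φ (circ t) 0) θ) ∧
    (Φ (2 * π) - Φ 0) / (2 * π)
      = (1 / (2 * π)) * ∫ θ in (0 : ℝ)..(2 * π),
          (φ (circ θ) 0 * deriv (fun t => φ (circ t) 1) θ
            - φ (circ θ) 1 * deriv (fun t => φ (circ t) 0) θ) := by
  have hπ : (0 : ℝ) < π := Real.pi_pos
  have h2π : (0 : ℝ) < 2 * π := by linarith
  -- f := φ ∘ circ is Lipschitz
  have hmaps : Set.MapsTo circ Set.univ (Metric.sphere (0 : E2) 1) := fun t _ => by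
    simp [mem_sphere_zero_iff_norm, circ_norm]
  have hfl : LipschitzWith (K * 1) (φ ∘ circ) :=
    lipschitzOnWith_univ.mp (hlip.comp circ_lipschitz.lipschitzOnWith hmaps)
  -- uniform continuity of Φ
  obtain ⟨δ, hδpos, hδ⟩ := Metric.uniformContinuousOn_iff.mp
    (isCompact_Icc.uniformContinuousOn_of_continuous hΦc) π hπ
  set C : ℝ := π / 2 * K with hC
  have hCnn : 0 ≤ C := by positivity
  -- local Lipschitz estimate
  have hloc : ∀ u ∈ Icc (0:ℝ) (2*π), ∀ v ∈ Icc (0:ℝ) (2*π), dist u v < δ →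
      |Φ u - Φ v| ≤ C * |u - v| := by
    intro u hu v hv huv
    have h1 : |Φ u - Φ v| ≤ π := by
      have := hδ u hu v hv huv
      rw [Real.dist_eq] at this
      exact this.le
    have h2 := dist_le_circ h1
    have h3 : circ (Φ u) - circ (Φ v) = φ (circ u) - φ (circ v) := by
      rw [hΦ u hu, hΦ v hv]
    have h4 : ‖φ (circ u) - φ (circ v)‖ ≤ (K : ℝ) * |u - v| := by
      have := hfl.dist_le_mul u v
      rw [dist_eq_norm, Real.dist_eq] at this
      simpa using this
    rw [h3] at h2
    calc |Φ u - Φ v| ≤ π / 2 * ‖φ (circ u) - φ (circ v)‖ := h2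
      _ ≤ π / 2 * ((K : ℝ) * |u - v|) := by
          apply mul_le_mul_of_nonneg_left h4 (by positivity)
      _ = C * |u - v| := by rw [hC]; ring
  -- chaining: global Lipschitz on [0, 2π]
  have hchain : ∀ s₀ ∈ Icc (0:ℝ) (2*π), ∀ t ∈ Icc s₀ (2*π), |Φ t - Φ s₀| ≤ C * (t - s₀) := by
    intro s₀ hs₀
    have key : Icc s₀ (2*π) ⊆ {t | |Φ t - Φ s₀| ≤ C * (t - s₀)} := by
      apply IsClosed.Icc_subset_of_forall_mem_nhdsWithin
      · have hset : {t | |Φ t - Φ s₀| ≤ C * (t - s₀)} ∩ Icc s₀ (2*π)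
            = Icc s₀ (2*π) ∩ (fun t => |Φ t - Φ s₀| - C * (t - s₀)) ⁻¹' (Iic 0) := by
          ext t
          simp only [mem_inter_iff, mem_setOf_eq, mem_preimage, mem_Iic, sub_nonpos]
          tauto
        rw [hset]
        apply ContinuousOn.preimage_isClosed_of_isClosed _ isClosed_Icc isClosed_Iic
        have hΦc' : ContinuousOn Φ (Icc s₀ (2*π)) := hΦc.mono (Icc_subset_Icc hs₀.1 le_rfl)
        exact ((hΦc'.sub continuousOn_const).abs).sub (by fun_prop)
      · simp
      · rintro x ⟨hxs, hx1, hx2⟩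
        have hxIcc : x ∈ Icc (0:ℝ) (2*π) := ⟨le_trans hs₀.1 hx1, hx2.le⟩
        have hlt : x < min (x + δ/2) (2*π) := lt_min (by linarith) hx2
        refine mem_of_superset (Ioc_mem_nhdsGT_of_mem ⟨le_rfl, hlt⟩) ?_
        intro t ht
        have ht1 : x < t := ht.1
        have ht2 : t ≤ x + δ/2 := le_trans ht.2 (min_le_left _ _)
        have ht3 : t ≤ 2*π := le_trans ht.2 (min_le_right _ _)
        have htIcc : t ∈ Icc (0:ℝ) (2*π) := ⟨le_trans hxIcc.1 ht1.le, ht3⟩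
        have hdist : dist t x < δ := by
          rw [Real.dist_eq, abs_of_pos (by linarith)]; linarith
        have hl := hloc t htIcc x hxIcc hdist
        rw [abs_of_pos (by linarith : (0:ℝ) < t - x)] at hl
        simp only [mem_setOf_eq] at hxs ⊢
        calc |Φ t - Φ s₀| ≤ |Φ t - Φ x| + |Φ x - Φ s₀| := abs_sub_le _ _ _
          _ ≤ C * (t - x) + C * (x - s₀) := add_le_add hl hxs
          _ = C * (t - s₀) := by ring
    intro t ht
    exact key ht
  -- Φ is Lipschitz on Icc
  have hΦl : LipschitzOnWith (Real.toNNReal C) Φ (Icc 0 (2*π)) := by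
    rw [lipschitzOnWith_iff_dist_le_mul]
    intro u hu v hv
    rw [Real.dist_eq, Real.dist_eq, Real.coe_toNNReal _ hCnn]
    rcases le_total v u with hle | hle
    · rw [show |u - v| = u - v from abs_of_nonneg (by linarith)]
      exact hchain v hv u ⟨hle, hu.2⟩
    · rw [abs_sub_comm (Φ u), abs_sub_comm u,
        show |v - u| = v - u from abs_of_nonneg (by linarith)]
      exact hchain u hu v ⟨hle, hv.2⟩
  -- extend to global Lipschitz g
  obtain ⟨g, hgl, hgeq⟩ := hΦl.extend_real
  -- a.e. identity of integrand with deriv g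
  have hne : ∀ᵐ θ : ℝ, θ ∉ ({2*π} : Set ℝ) := (Set.countable_singleton _).ae_notMem _
  have hae2 : ∀ᵐ θ : ℝ, θ ∈ Set.uIoc (0:ℝ) (2*π) →
      (φ (circ θ) 0 * deriv (fun t => φ (circ t) 1) θ
        - φ (circ θ) 1 * deriv (fun t => φ (circ t) 0) θ) = deriv g θ := by
    filter_upwards [hgl.ae_differentiableAt_real, hne] with θ hd hneθ hmem
    rw [Set.uIoc_of_le h2π.le] at hmem
    have hIoo : θ ∈ Ioo (0:ℝ) (2*π) :=
      ⟨hmem.1, lt_of_le_of_ne hmem.2 (fun h => hneθ (by simp [h]))⟩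
    have hnhds : Ioo (0:ℝ) (2*π) ∈ 𝓝 θ := isOpen_Ioo.mem_nhds hIoo
    have hθIcc : θ ∈ Icc (0:ℝ) (2*π) := Ioo_subset_Icc_self hIoo
    have hev1 : (fun t => φ (circ t) 1) =ᶠ[𝓝 θ] fun t => Real.sin (g t) := by
      filter_upwards [hnhds] with t ht
      rw [hΦ t (Ioo_subset_Icc_self ht), ← hgeq (Ioo_subset_Icc_self ht)]
      rfl
    have hev0 : (fun t => φ (circ t) 0) =ᶠ[𝓝 θ] fun t => Real.cos (g t) := by
      filter_upwards [hnhds] with t ht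
      rw [hΦ t (Ioo_subset_Icc_self ht), ← hgeq (Ioo_subset_Icc_self ht)]
      rfl
    have hD : HasDerivAt g (deriv g θ) θ := hd.hasDerivAt
    rw [hev1.deriv_eq, hev0.deriv_eq, hD.sin.deriv, hD.cos.deriv]
    have hv0 : φ (circ θ) 0 = Real.cos (g θ) := by
      rw [hΦ θ hθIcc, ← hgeq hθIcc]; rfl
    have hv1 : φ (circ θ) 1 = Real.sin (g θ) := by
      rw [hΦ θ hθIcc, ← hgeq hθIcc]; rfl
    rw [hv0, hv1]
    have hpy := Real.sin_sq_add_cos_sq (g θ)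
    linear_combination (deriv g θ) * hpy
  have hint : (∫ θ in (0:ℝ)..(2*π),
      (φ (circ θ) 0 * deriv (fun t => φ (circ t) 1) θ
        - φ (circ θ) 1 * deriv (fun t => φ (circ t) 0) θ))
      = ∫ θ in (0:ℝ)..(2*π), deriv g θ := intervalIntegral.integral_congr_ae hae2
  have hftc := lipschitz_ftc hgl h2π.le
  have hg0 : g 0 = Φ 0 := (hgeq (left_mem_Icc.mpr h2π.le)).symm
  have hg2 : g (2*π) = Φ (2*π) := (hgeq (right_mem_Icc.mpr h2π.le)).symm
  have h1 : Φ (2 * π) - Φ 0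
      = ∫ θ in (0 : ℝ)..(2 * π),
          (φ (circ θ) 0 * deriv (fun t => φ (circ t) 1) θ
            - φ (circ θ) 1 * deriv (fun t => φ (circ t) 0) θ) := by
    rw [hint, hftc, hg0, hg2]
  exact ⟨h1, by rw [← h1]; ring⟩
end
end
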